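/- arXiv:1510.06680 — 4 statements merged into one kernel-verified Lean document; each statement's English description precedes it below -/
import Mathlib

section
/- Assume Hypotheses 4.1. For pairwise distinct x,y,z ∈ Ω: if x ∈ \overline{y,z} then [y,z]·[x,y]·[y,z] = [x,y], and if x ∉ \overline{y,z} then [y,z]·[x,y]·[y,z] = [x,z]. -/
open Equiv

variable {Ω : Type*}

/-- `(Ω, B)` is a `2-(n,4,lam)` design: `Ω` has `n` points, every line has 4 points,
and every 2-element subset of `Ω` is contained in exactly `lam` lines. -/
def IsDesign [Fintype Ω] (B : Set (Finset Ω)) (n lam : ℕ) : Prop :=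
  Fintype.card Ω = n ∧
  (∀ L ∈ B, L.card = 4) ∧
  (∀ p : Finset Ω, p.card = 2 → {L ∈ B | p ⊆ L}.ncard = lam)

/-- A design is supersimple if any two distinct lines intersect in at most two points. -/
def Supersimple [DecidableEq Ω] (B : Set (Finset Ω)) : Prop :=
  ∀ L₁ ∈ B, ∀ L₂ ∈ B, L₁ ≠ L₂ → (L₁ ∩ L₂).card ≤ 2

/-- Condition (△): the symmetric difference of two lines meeting in two points is a line. -/
def SymmDiffCond [DecidableEq Ω] (B : Set (Finset Ω)) : Prop :=
  ∀ L₁ ∈ B, ∀ L₂ ∈ B, (L₁ ∩ L₂).card = 2 → symmDiff L₁ L₂ ∈ B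

/-- The collinear triples: 3-element subsets contained in some line. -/
def collinearTriples (B : Set (Finset Ω)) : Set (Finset Ω) :=
  { t | t.card = 3 ∧ ∃ L ∈ B, t ⊆ L }

/-- `(Ω, C)` is a regular two-graph: `C` is a set of 3-element subsets, every 2-element
subset lies in exactly `μ` members of `C` for a constant `μ`, and every 4-element subset
contains exactly 0, 2 or 4 members of `C`. -/
def IsRegularTwoGraph (C : Set (Finset Ω)) : Prop :=
  (∀ t ∈ C, t.card = 3) ∧
  (∃ μ : ℕ, ∀ p : Finset Ω, p.card = 2 → {t ∈ C | p ⊆ t}.ncard = μ) ∧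
  (∀ q : Finset Ω, q.card = 4 →
    {t ∈ C | t ⊆ q}.ncard = 0 ∨ {t ∈ C | t ⊆ q}.ncard = 2 ∨ {t ∈ C | t ⊆ q}.ncard = 4)

/-- `mv a b` is the elementary move `[a,b]`: it is the identity when `a = b`; when `a ≠ b`
it interchanges `a` and `b`, interchanges `x` and `y` whenever `{a,b,x,y}` is a line, and
fixes every point not collinear with `a, b`. -/
def IsElemMoveFn [DecidableEq Ω] (B : Set (Finset Ω)) (mv : Ω → Ω → Equiv.Perm Ω) : Prop :=
  (∀ a, mv a a = 1) ∧
  ∀ a b : Ω, a ≠ b →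
    mv a b a = b ∧ mv a b b = a ∧
    (∀ x y : Ω, ({a, b, x, y} : Finset Ω) ∈ B → mv a b x = y) ∧
    (∀ x : Ω, x ≠ a → x ≠ b → (∀ L ∈ B, ¬(a ∈ L ∧ b ∈ L ∧ x ∈ L)) → mv a b x = x)

/-- The move sequence `[a, b₁, …, b_k] = [a,b₁][b₁,b₂]⋯[b_{k-1},b_k]`; the factors are
applied left-to-right (so in Lean's convention the product is reversed). -/
def moveSeq (mv : Ω → Ω → Equiv.Perm Ω) : Ω → List Ω → Equiv.Perm Ω
  | _, [] => 1
  | a, b :: l => moveSeq mv b l * mv a b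

/-- The Conway groupoid `L_x(D)`: all move sequences starting at `x`. -/
def ConwayGroupoid (mv : Ω → Ω → Equiv.Perm Ω) (x : Ω) : Set (Equiv.Perm Ω) :=
  { g | ∃ l : List Ω, g = moveSeq mv x l }

/-- The hole stabilizer `π_x(D)`: all move sequences starting and ending at `x`. -/
def holeStabilizer (mv : Ω → Ω → Equiv.Perm Ω) (x : Ω) : Set (Equiv.Perm Ω) :=
  { g | ∃ l : List Ω, g = moveSeq mv x (l ++ [x]) }

/-- `L(D)`: the set of all move sequences. -/
def allMoveSeqs (mv : Ω → Ω → Equiv.Perm Ω) : Set (Equiv.Perm Ω) :=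
  { g | ∃ (a : Ω) (l : List Ω), g = moveSeq mv a l }

/-- The set `E` of elementary moves `[a,b]` with `a ≠ b`. -/
def elemMoves (mv : Ω → Ω → Equiv.Perm Ω) : Set (Equiv.Perm Ω) :=
  { g | ∃ a b : Ω, a ≠ b ∧ g = mv a b }

/-- `\overline{x,y}`: the set of points lying on a common line with `x` and `y`. -/
def lineJoin (B : Set (Finset Ω)) (x y : Ω) : Set Ω :=
  { z | ∃ L ∈ B, x ∈ L ∧ y ∈ L ∧ z ∈ L }

/-- A set `G` of permutations is transitive on `S`. -/
def SetTransitiveOn (G : Set (Equiv.Perm Ω)) (S : Set Ω) : Prop :=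
  ∀ x ∈ S, ∀ y ∈ S, ∃ g ∈ G, g x = y

/-- `Δ` is a block for the set `G` of permutations. -/
def SetIsBlock (G : Set (Equiv.Perm Ω)) (Δ : Set Ω) : Prop :=
  ∀ g ∈ G, (⇑g) '' Δ = Δ ∨ Disjoint ((⇑g) '' Δ) Δ

/-- A set `G` of permutations is primitive on `S`: it is transitive on `S` and every
block contained in `S` is trivial (equivalently, the only invariant partitions are the
partition into singletons and the one-part partition). -/
def SetPrimitiveOn (G : Set (Equiv.Perm Ω)) (S : Set Ω) : Prop :=
  SetTransitiveOn G S ∧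
  ∀ Δ : Set Ω, Δ ⊆ S → SetIsBlock G Δ → Δ.Subsingleton ∨ Δ = S

/-- Primitivity on all of `Ω`. -/
def SetPrimitive (G : Set (Equiv.Perm Ω)) : Prop :=
  SetPrimitiveOn G Set.univ

/-- `(G, E)` is a 3-transposition group: `G` is the group generated by `E`, `E` is a
union of `G`-conjugacy classes of involutions, and any product of two members of `E`
has order 1, 2 or 3. -/
def Is3TranspositionGroup (G E : Set (Equiv.Perm Ω)) : Prop :=
  ((Subgroup.closure E : Subgroup (Equiv.Perm Ω)) : Set (Equiv.Perm Ω)) = G ∧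
  (∀ e ∈ E, orderOf e = 2) ∧
  (∀ g ∈ G, ∀ e ∈ E, g * e * g⁻¹ ∈ E) ∧
  (∀ g ∈ E, ∀ h ∈ E, orderOf (g * h) = 1 ∨ orderOf (g * h) = 2 ∨ orderOf (g * h) = 3)

/-- Two designs are isomorphic: a bijection of the point sets carrying lines to lines. -/
def DesignIso {Ω₁ Ω₂ : Type*} (B₁ : Set (Finset Ω₁)) (B₂ : Set (Finset Ω₂)) : Prop :=
  ∃ e : Ω₁ ≃ Ω₂, ∀ L : Finset Ω₁, L ∈ B₁ ↔ L.map e.toEmbedding ∈ B₂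

/-- The lines of the Boolean quadruple system of order `2^m`: 4-subsets of `F_2^m`
summing to zero. -/
def booleanLines (m : ℕ) : Set (Finset (Fin m → ZMod 2)) :=
  { L | L.card = 4 ∧ ∑ v ∈ L, v = 0 }

/-- `V = F_2^{2m}`, with coordinates indexed by `Fin m ⊕ Fin m`. -/
abbrev Vsp (m : ℕ) := (Fin m ⊕ Fin m) → ZMod 2

/-- `θ(u) = u e uᵀ` where `e` is the block matrix `(0 I; 0 0)`. -/
def theta {m : ℕ} (u : Vsp m) : ZMod 2 :=
  ∑ i : Fin m, u (Sum.inl i) * u (Sum.inr i)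

/-- The lines of the design `D^a`: 4-subsets of `V` summing to zero on which `θ` sums
to zero. -/
def linesA (m : ℕ) : Set (Finset (Vsp m)) :=
  { L | L.card = 4 ∧ ∑ v ∈ L, v = 0 ∧ ∑ v ∈ L, theta v = 0 }

/-- The lines of the design `D^ε`: 4-subsets of `{v ∈ V : θ(v) = ε}` summing to zero. -/
def linesEps (m : ℕ) (ε : ZMod 2) : Set (Finset {v : Vsp m // theta v = ε}) :=
  { L | L.card = 4 ∧ ∑ v ∈ L, (v : Vsp m) = 0 }

/-- The derived graph `G_{D,∞}`: vertices are the points other than `∞`, with `a, b`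
adjacent iff `{∞,a,b}` is a collinear triple. -/
def derivedGraph [DecidableEq Ω] (B : Set (Finset Ω)) (inf : Ω) :
    SimpleGraph {x : Ω // x ≠ inf} where
  Adj a b := a ≠ b ∧ ({inf, (a : Ω), (b : Ω)} : Finset Ω) ∈ collinearTriples B
  symm := by
    constructor
    rintro a b ⟨hab, h⟩
    exact ⟨hab.symm, by rwa [Finset.pair_comm (b : Ω) (a : Ω)]⟩
  loopless := by constructor; rintro a ⟨h, -⟩; exact h rfl

/-- `w` witnesses the triangle property for the edge `{u,v}`: `w` is a common neighbour
of `u` and `v`, and every other vertex is adjacent to exactly one or three of `u,v,w`. -/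
def TriangleWitness {V : Type*} (G : SimpleGraph V) (u v w : V) : Prop :=
  G.Adj u w ∧ G.Adj v w ∧
  ∀ x : V, x ∉ ({u, v, w} : Set V) →
    ({y ∈ ({u, v, w} : Set V) | G.Adj x y}.ncard = 1 ∨
     {y ∈ ({u, v, w} : Set V) | G.Adj x y}.ncard = 3)

/-- The triangle property for a graph. -/
def HasTriangleProperty {V : Type*} (G : SimpleGraph V) : Prop :=
  (∃ u v, G.Adj u v) ∧ ∀ u v : V, G.Adj u v → ∃ w, TriangleWitness G u v w

/-- The strong triangle property: each edge has a unique triangle-property witness. -/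
def HasStrongTriangleProperty {V : Type*} (G : SimpleGraph V) : Prop :=
  (∃ u v, G.Adj u v) ∧ ∀ u v : V, G.Adj u v → ∃! w, TriangleWitness G u v w

/-- A coherent 4-subset: all four of its 3-element subsets lie in `C`. -/
def IsCoherent (C : Set (Finset Ω)) (q : Finset Ω) : Prop :=
  q.card = 4 ∧ ∀ t ⊆ q, t.card = 3 → t ∈ C

section Lemma44Helpers

/-- Three points are collinear: some line contains all three. -/
def Col (B : Set (Finset Ω)) (a b c : Ω) : Prop := ∃ L ∈ B, a ∈ L ∧ b ∈ L ∧ c ∈ L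

variable [DecidableEq Ω]

lemma triple_card {a b c : Ω} (hab : a ≠ b) (hac : a ≠ c) (hbc : b ≠ c) :
    ({a, b, c} : Finset Ω).card = 3 := by
  rw [Finset.card_insert_of_notMem (by simp [hab, hac]),
    Finset.card_insert_of_notMem (by simp [hbc]), Finset.card_singleton]

lemma card_triple_le (a b c : Ω) : ({a, b, c} : Finset Ω).card ≤ 3 := by
  refine le_trans (Finset.card_insert_le _ _) ?_
  have := Finset.card_insert_le b ({c} : Finset Ω)
  simp at this ⊢
  omega

lemma quad_card {a b c d : Ω} (hab : a ≠ b) (hac : a ≠ c) (had : a ≠ d)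
    (hbc : b ≠ c) (hbd : b ≠ d) (hcd : c ≠ d) :
    ({a, b, c, d} : Finset Ω).card = 4 := by
  rw [Finset.card_insert_of_notMem (by simp [hab, hac, had]),
    Finset.card_insert_of_notMem (by simp [hbc, hbd]),
    Finset.card_insert_of_notMem (by simp [hcd]), Finset.card_singleton]

lemma quad_pairwise {a b c d : Ω} (h : ({a, b, c, d} : Finset Ω).card = 4) :
    a ≠ b ∧ a ≠ c ∧ a ≠ d ∧ b ≠ c ∧ b ≠ d ∧ c ≠ d := by
  refine ⟨?_, ?_, ?_, ?_, ?_, ?_⟩ <;> rintro rfl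
  · have hs : ({a, a, c, d} : Finset Ω) ⊆ {a, c, d} := by intro u; simp; try tauto
    have := (Finset.card_le_card hs).trans (card_triple_le a c d); omega
  · have hs : ({a, b, a, d} : Finset Ω) ⊆ {a, b, d} := by intro u; simp; try tauto
    have := (Finset.card_le_card hs).trans (card_triple_le a b d); omega
  · have hs : ({a, b, c, a} : Finset Ω) ⊆ {a, b, c} := by intro u; simp; try tauto
    have := (Finset.card_le_card hs).trans (card_triple_le a b c); omega
  · have hs : ({a, b, b, d} : Finset Ω) ⊆ {a, b, d} := by intro u; simp; try tauto
    have := (Finset.card_le_card hs).trans (card_triple_le a b d); omega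
  · have hs : ({a, b, c, b} : Finset Ω) ⊆ {a, b, c} := by intro u; simp; try tauto
    have := (Finset.card_le_card hs).trans (card_triple_le a b c); omega
  · have hs : ({a, b, c, c} : Finset Ω) ⊆ {a, b, c} := by intro u; simp; try tauto
    have := (Finset.card_le_card hs).trans (card_triple_le a b c); omega

lemma quad_pairwise' [Fintype Ω] {B : Set (Finset Ω)} {n lam : ℕ} (hD : IsDesign B n lam)
    {a b c d : Ω} (h : ({a, b, c, d} : Finset Ω) ∈ B) :
    a ≠ b ∧ a ≠ c ∧ a ≠ d ∧ b ≠ c ∧ b ≠ d ∧ c ≠ d :=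
  quad_pairwise (hD.2.1 _ h)

lemma lines_eq {B : Set (Finset Ω)} (hss : Supersimple B) {L₁ L₂ : Finset Ω}
    (h1 : L₁ ∈ B) (h2 : L₂ ∈ B) {a b c : Ω} (hab : a ≠ b) (hac : a ≠ c) (hbc : b ≠ c)
    (ha1 : a ∈ L₁) (hb1 : b ∈ L₁) (hc1 : c ∈ L₁)
    (ha2 : a ∈ L₂) (hb2 : b ∈ L₂) (hc2 : c ∈ L₂) : L₁ = L₂ := by
  by_contra hne
  have hle := hss L₁ h1 L₂ h2 hne
  have hsub : ({a, b, c} : Finset Ω) ⊆ L₁ ∩ L₂ := by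
    intro u hu
    simp only [Finset.mem_insert, Finset.mem_singleton] at hu
    rcases hu with rfl | rfl | rfl <;> simp [Finset.mem_inter, *]
  have := Finset.card_le_card hsub
  rw [triple_card hab hac hbc] at this
  omega

lemma line_of_col [Fintype Ω] {B : Set (Finset Ω)} {n lam : ℕ} (hD : IsDesign B n lam)
    {a b c : Ω} (hab : a ≠ b) (hac : a ≠ c) (hbc : b ≠ c) (h : Col B a b c) :
    ∃ d, ({a, b, c, d} : Finset Ω) ∈ B := by
  obtain ⟨L, hL, ha, hb, hc⟩ := h
  have hcard := hD.2.1 L hL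
  have hlt : ({a, b, c} : Finset Ω).card < L.card := by
    rw [triple_card hab hac hbc, hcard]; omega
  have hsub0 : ({a, b, c} : Finset Ω) ⊆ L := by
    intro u hu
    simp only [Finset.mem_insert, Finset.mem_singleton] at hu
    rcases hu with rfl | rfl | rfl <;> assumption
  obtain ⟨d, hdL, hd⟩ := Finset.exists_of_ssubset
    (hsub0.ssubset_of_ne (by intro h; rw [h] at hlt; omega))
  simp only [Finset.mem_insert, Finset.mem_singleton] at hd
  push_neg at hd
  have hsub : ({a, b, c, d} : Finset Ω) ⊆ L := by
    intro u hu
    simp only [Finset.mem_insert, Finset.mem_singleton] at hu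
    rcases hu with rfl | rfl | rfl | rfl <;> assumption
  have hq : ({a, b, c, d} : Finset Ω).card = 4 :=
    quad_card hab hac (Ne.symm hd.1) hbc (Ne.symm hd.2.1) (Ne.symm hd.2.2)
  have : ({a, b, c, d} : Finset Ω) = L :=
    Finset.eq_of_subset_of_card_le hsub (by omega)
  exact ⟨d, this ▸ hL⟩

lemma symmdiff_quad {B : Set (Finset Ω)} (hsd : SymmDiffCond B)
    {a b c d e f : Ω} (hab : a ≠ b)
    (h1 : ({a, b, c, d} : Finset Ω) ∈ B) (h2 : ({a, b, e, f} : Finset Ω) ∈ B)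
    (hca : c ≠ a) (hcb : c ≠ b) (hce : c ≠ e) (hcf : c ≠ f)
    (hda : d ≠ a) (hdb : d ≠ b) (hde : d ≠ e) (hdf : d ≠ f)
    (hea : e ≠ a) (heb : e ≠ b) (hfa : f ≠ a) (hfb : f ≠ b) :
    ({c, d, e, f} : Finset Ω) ∈ B := by
  have hint : ({a, b, c, d} : Finset Ω) ∩ {a, b, e, f} = {a, b} := by
    ext u
    simp only [Finset.mem_inter, Finset.mem_insert, Finset.mem_singleton]
    constructor
    · rintro ⟨rfl | rfl | rfl | rfl, h⟩
      · exact Or.inl rfl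
      · exact Or.inr rfl
      · exact absurd h (by simp [hca, hcb, hce, hcf])
      · exact absurd h (by simp [hda, hdb, hde, hdf])
    · rintro (rfl | rfl)
      · exact ⟨Or.inl rfl, Or.inl rfl⟩
      · exact ⟨Or.inr (Or.inl rfl), Or.inr (Or.inl rfl)⟩
  have hcard : (({a, b, c, d} : Finset Ω) ∩ {a, b, e, f}).card = 2 := by
    rw [hint, Finset.card_insert_of_notMem (by simp [hab]), Finset.card_singleton]
  have hmem := hsd _ h1 _ h2 hcard
  have heq : symmDiff ({a, b, c, d} : Finset Ω) {a, b, e, f} = {c, d, e, f} := by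
    ext u
    simp only [Finset.mem_symmDiff, Finset.mem_insert, Finset.mem_singleton]
    constructor
    · rintro (⟨rfl | rfl | rfl | rfl, h⟩ | ⟨rfl | rfl | rfl | rfl, h⟩)
      · exact absurd (Or.inl rfl) h
      · exact absurd (Or.inr (Or.inl rfl)) h
      · exact Or.inl rfl
      · exact Or.inr (Or.inl rfl)
      · exact absurd (Or.inl rfl) h
      · exact absurd (Or.inr (Or.inl rfl)) h
      · exact Or.inr (Or.inr (Or.inl rfl))
      · exact Or.inr (Or.inr (Or.inr rfl))
    · rintro (rfl | rfl | rfl | rfl)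
      · exact Or.inl ⟨Or.inr (Or.inr (Or.inl rfl)), by simp [hca, hcb, hce, hcf]⟩
      · exact Or.inl ⟨Or.inr (Or.inr (Or.inr rfl)), by simp [hda, hdb, hde, hdf]⟩
      · exact Or.inr ⟨Or.inr (Or.inr (Or.inl rfl)), by simp [hea, heb, hce.symm, hde.symm]⟩
      · exact Or.inr ⟨Or.inr (Or.inr (Or.inr rfl)), by simp [hfa, hfb, hcf.symm, hdf.symm]⟩
  rwa [heq] at hmem

end Lemma44Helpers

section Lemma44Parity

variable [DecidableEq Ω]

lemma col_iff_triple {B : Set (Finset Ω)} {a b c : Ω}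
    (hab : a ≠ b) (hac : a ≠ c) (hbc : b ≠ c) :
    Col B a b c ↔ ({a, b, c} : Finset Ω) ∈ collinearTriples B := by
  constructor
  · rintro ⟨L, hL, h1, h2, h3⟩
    refine ⟨triple_card hab hac hbc, L, hL, ?_⟩
    intro u hu
    simp only [Finset.mem_insert, Finset.mem_singleton] at hu
    rcases hu with rfl | rfl | rfl <;> assumption
  · rintro ⟨h3, L, hL, hsub⟩
    exact ⟨L, hL, hsub (by simp), hsub (by simp), hsub (by simp)⟩

lemma three_subsets {a b c d : Ω} (hab : a ≠ b) (hac : a ≠ c) (had : a ≠ d)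
    (hbc : b ≠ c) (hbd : b ≠ d) (hcd : c ≠ d)
    {t : Finset Ω} (hsub : t ⊆ ({a, b, c, d} : Finset Ω)) (ht : t.card = 3) :
    t = {b, c, d} ∨ t = {a, c, d} ∨ t = {a, b, d} ∨ t = {a, b, c} := by
  have hq : ({a, b, c, d} : Finset Ω).card = 4 := quad_card hab hac had hbc hbd hcd
  have hlt : t.card < ({a, b, c, d} : Finset Ω).card := by omega
  obtain ⟨e, heq, het⟩ := Finset.exists_of_ssubset (hsub.ssubset_of_ne (by
    intro h; rw [h] at ht; omega))
  have hte : t = ({a, b, c, d} : Finset Ω).erase e := by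
    apply Finset.eq_of_subset_of_card_le
    · intro u hu
      exact Finset.mem_erase.mpr ⟨fun h => het (h ▸ hu), hsub hu⟩
    · rw [Finset.card_erase_of_mem heq, hq, ht]
  simp only [Finset.mem_insert, Finset.mem_singleton] at heq
  rcases heq with rfl | rfl | rfl | rfl
  · left
    rw [hte]; ext u
    simp only [Finset.mem_erase, Finset.mem_insert, Finset.mem_singleton]
    constructor
    · rintro ⟨hne, rfl | h⟩; · exact absurd rfl hne
      exact h
    · rintro (rfl | rfl | rfl) <;>
        exact ⟨by simp [hab.symm, hac.symm, had.symm, *], by tauto⟩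
  · right; left
    rw [hte]; ext u
    simp only [Finset.mem_erase, Finset.mem_insert, Finset.mem_singleton]
    constructor
    · rintro ⟨hne, rfl | rfl | h⟩
      · exact Or.inl rfl
      · exact absurd rfl hne
      · tauto
    · rintro (rfl | rfl | rfl) <;>
        exact ⟨by simp [hab, hbc.symm, hbd.symm, *], by tauto⟩
  · right; right; left
    rw [hte]; ext u
    simp only [Finset.mem_erase, Finset.mem_insert, Finset.mem_singleton]
    constructor
    · rintro ⟨hne, rfl | rfl | rfl | h⟩
      · exact Or.inl rfl
      · exact Or.inr (Or.inl rfl)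
      · exact absurd rfl hne
      · tauto
    · rintro (rfl | rfl | rfl) <;>
        exact ⟨by simp [hac, hbc, hcd.symm, *], by tauto⟩
  · right; right; right
    rw [hte]; ext u
    simp only [Finset.mem_erase, Finset.mem_insert, Finset.mem_singleton]
    constructor
    · rintro ⟨hne, rfl | rfl | rfl | rfl⟩
      · exact Or.inl rfl
      · exact Or.inr (Or.inl rfl)
      · exact Or.inr (Or.inr rfl)
      · exact absurd rfl hne
    · rintro (rfl | rfl | rfl) <;>
        exact ⟨by simp [had, hbd, hcd, *], by tauto⟩

set_option maxHeartbeats 2000000 in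
lemma two_graph_parity [Fintype Ω] {B : Set (Finset Ω)}
    (hRT : IsRegularTwoGraph (collinearTriples B))
    {a b c d : Ω} (hab : a ≠ b) (hac : a ≠ c) (had : a ≠ d)
    (hbc : b ≠ c) (hbd : b ≠ d) (hcd : c ≠ d) :
    ((Col B a b c ↔ Col B a b d) ↔ (Col B a c d ↔ Col B b c d)) := by
  classical
  have hq : ({a, b, c, d} : Finset Ω).card = 4 := quad_card hab hac had hbc hbd hcd
  have h024 := hRT.2.2 _ hq
  have hT12 : ({a, b, c} : Finset Ω) ≠ {a, b, d} := by
    intro h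
    have : c ∈ ({a, b, d} : Finset Ω) := h ▸ (by simp)
    simp [hac.symm, hbc.symm, hcd] at this
  have hT13 : ({a, b, c} : Finset Ω) ≠ {a, c, d} := by
    intro h
    have : b ∈ ({a, c, d} : Finset Ω) := h ▸ (by simp)
    simp [hab.symm, hbc, hbd] at this
  have hT14 : ({a, b, c} : Finset Ω) ≠ {b, c, d} := by
    intro h
    have : a ∈ ({b, c, d} : Finset Ω) := h ▸ (by simp)
    simp [hab, hac, had] at this
  have hT23 : ({a, b, d} : Finset Ω) ≠ {a, c, d} := by
    intro h
    have : b ∈ ({a, c, d} : Finset Ω) := h ▸ (by simp)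
    simp [hab.symm, hbc, hbd] at this
  have hT24 : ({a, b, d} : Finset Ω) ≠ {b, c, d} := by
    intro h
    have : a ∈ ({b, c, d} : Finset Ω) := h ▸ (by simp)
    simp [hab, hac, had] at this
  have hT34 : ({a, c, d} : Finset Ω) ≠ {b, c, d} := by
    intro h
    have : a ∈ ({b, c, d} : Finset Ω) := h ▸ (by simp)
    simp [hab, hac, had] at this
  have hS : {t ∈ collinearTriples B | t ⊆ ({a, b, c, d} : Finset Ω)}
      = (↑((({({a, b, c} : Finset Ω), {a, b, d}, {a, c, d}, {b, c, d}} :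
          Finset (Finset Ω))).filter (· ∈ collinearTriples B)) : Set (Finset Ω)) := by
    ext t
    simp only [Set.mem_setOf_eq, Finset.coe_filter, Finset.mem_insert, Finset.mem_singleton]
    constructor
    · rintro ⟨htC, htq⟩
      have h3 := hRT.1 t htC
      rcases three_subsets hab hac had hbc hbd hcd htq h3 with rfl | rfl | rfl | rfl
      · exact ⟨Or.inr (Or.inr (Or.inr rfl)), htC⟩
      · exact ⟨Or.inr (Or.inr (Or.inl rfl)), htC⟩
      · exact ⟨Or.inr (Or.inl rfl), htC⟩
      · exact ⟨Or.inl rfl, htC⟩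
    · rintro ⟨rfl | rfl | rfl | rfl, htC⟩ <;>
      · refine ⟨htC, ?_⟩
        intro u hu
        simp only [Finset.mem_insert, Finset.mem_singleton] at hu ⊢
        tauto
  rw [hS, Set.ncard_coe_finset] at h024
  rw [Finset.card_filter,
    Finset.sum_insert (by
      simp only [Finset.mem_insert, Finset.mem_singleton]
      push_neg
      exact ⟨hT12, hT13, hT14⟩),
    Finset.sum_insert (by
      simp only [Finset.mem_insert, Finset.mem_singleton]
      push_neg
      exact ⟨hT23, hT24⟩),
    Finset.sum_insert (by simp only [Finset.mem_singleton]; exact hT34),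
    Finset.sum_singleton] at h024
  rw [col_iff_triple hab hac hbc, col_iff_triple hab had hbd,
    col_iff_triple hac had hcd, col_iff_triple hbc hbd hcd]
  by_cases h1 : ({a, b, c} : Finset Ω) ∈ collinearTriples B <;>
    by_cases h2 : ({a, b, d} : Finset Ω) ∈ collinearTriples B <;>
    by_cases h3 : ({a, c, d} : Finset Ω) ∈ collinearTriples B <;>
    by_cases h4 : ({b, c, d} : Finset Ω) ∈ collinearTriples B <;>
    simp only [h1, h2, h3, h4, if_true, if_false, not_false_iff, iff_true, iff_false,
      not_true, if_pos, if_neg] at h024 ⊢ <;>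
    first | tauto | omega

end Lemma44Parity

section ColPerm

lemma col_of_mem {B : Set (Finset Ω)} {L : Finset Ω} (hL : L ∈ B) {a b c : Ω}
    (ha : a ∈ L) (hb : b ∈ L) (hc : c ∈ L) : Col B a b c := ⟨L, hL, ha, hb, hc⟩

lemma col_cycle {B : Set (Finset Ω)} {a b c : Ω} (h : Col B a b c) : Col B b c a := by
  obtain ⟨L, hL, h1, h2, h3⟩ := h; exact ⟨L, hL, h2, h3, h1⟩

lemma col_swap {B : Set (Finset Ω)} {a b c : Ω} (h : Col B a b c) : Col B b a c := by
  obtain ⟨L, hL, h1, h2, h3⟩ := h; exact ⟨L, hL, h2, h1, h3⟩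

end ColPerm

set_option maxHeartbeats 16000000 in
lemma elemMove_conj_part1    [Fintype Ω] [DecidableEq Ω] {B : Set (Finset Ω)} {n lam : ℕ}
    (hD : IsDesign B n lam) (hss : Supersimple B) (hsd : SymmDiffCond B)
    (hRT : IsRegularTwoGraph (collinearTriples B))
    (mv : Ω → Ω → Equiv.Perm Ω) (hmv : IsElemMoveFn B mv)
    (x y z : Ω) (hxy : x ≠ y) (hyz : y ≠ z) (hxz : x ≠ z)
    (hcol : Col B y z x) : mv y z * mv x y * mv y z = mv x y := by
  obtain ⟨hmv0, hmv2⟩ := hmv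
  have mvq : ∀ a b u v : Ω, a ≠ b → ({a, b, u, v} : Finset Ω) ∈ B → mv a b u = v :=
    fun a b u v h hq => (hmv2 a b h).2.2.1 u v hq
  have mvfix : ∀ a b u : Ω, a ≠ b → u ≠ a → u ≠ b → ¬ Col B a b u → mv a b u = u :=
    fun a b u h h1 h2 hc => (hmv2 a b h).2.2.2 u h1 h2 (fun L hL hm => hc ⟨L, hL, hm⟩)
  have mvA : ∀ a b : Ω, a ≠ b → mv a b a = b := fun a b h => (hmv2 a b h).1
  have mvB : ∀ a b : Ω, a ≠ b → mv a b b = a := fun a b h => (hmv2 a b h).2.1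
  obtain ⟨w, hL0⟩ := line_of_col hD hyz hxy.symm hxz.symm hcol
  obtain ⟨-, -, hyw, -, hzw, hxw⟩ := quad_pairwise' hD hL0
  have hLxywz : ({x, y, w, z} : Finset Ω) ∈ B := by
    have e : ({x, y, w, z} : Finset Ω) = {y, z, x, w} := by ext u; simp only [Finset.mem_insert, Finset.mem_singleton]; constructor <;> rintro (rfl | rfl | rfl | rfl) <;> simp
    rw [e]; exact hL0
  have hLxyzw : ({x, y, z, w} : Finset Ω) ∈ B := by
    have e : ({x, y, z, w} : Finset Ω) = {y, z, x, w} := by ext u; simp only [Finset.mem_insert, Finset.mem_singleton]; constructor <;> rintro (rfl | rfl | rfl | rfl) <;> simp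
    rw [e]; exact hL0
  have hLyzwx : ({y, z, w, x} : Finset Ω) ∈ B := by
    have e : ({y, z, w, x} : Finset Ω) = {y, z, x, w} := by ext u; simp only [Finset.mem_insert, Finset.mem_singleton]; constructor <;> rintro (rfl | rfl | rfl | rfl) <;> simp
    rw [e]; exact hL0
  ext p
  simp only [Equiv.Perm.mul_apply]
  by_cases hp1 : p = x
  · rw [hp1, mvq y z x w hyz hL0, mvq x y w z hxy hLxywz, mvB y z hyz, mvA x y hxy]
  by_cases hp2 : p = y
  · rw [hp2, mvA y z hyz, mvq x y z w hxy hLxyzw, mvq y z w x hyz hLyzwx, mvB x y hxy]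
  by_cases hp3 : p = z
  · rw [hp3, mvB y z hyz, mvB x y hxy, mvq y z x w hyz hL0, mvq x y z w hxy hLxyzw]
  by_cases hp4 : p = w
  · rw [hp4, mvq y z w x hyz hLyzwx, mvA x y hxy, mvA y z hyz, mvq x y w z hxy hLxywz]
  -- now p ∉ {x, y, z, w}
  have hpar := two_graph_parity hRT (a := y) (b := z) (c := x) (d := p)
    hyz hxy.symm (Ne.symm hp2) hxz.symm (Ne.symm hp3) (Ne.symm hp1)
  by_cases hpc : Col B y z p
  · -- p collinear with y, z; line N = {y,z,p,q}
    obtain ⟨q, hN⟩ := line_of_col hD hyz (Ne.symm hp2) (Ne.symm hp3) hpc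
    obtain ⟨-, -, hyq, -, hzq, hpq⟩ := quad_pairwise' hD hN
    have hqx : q ≠ x := by
      intro hE; rw [hE] at hN
      have heq := lines_eq hss hN hL0 hyz hxy.symm hxz.symm
        (by simp) (by simp) (by simp) (by simp) (by simp) (by simp)
      have hmem2 : p ∈ ({y, z, x, w} : Finset Ω) := by rw [← heq]; simp
      simp [hp1, hp2, hp3, hp4] at hmem2
    have hqw : q ≠ w := by
      intro hE; rw [hE] at hN
      have heq := lines_eq hss hN hL0 hyz hyw hzw
        (by simp) (by simp) (by simp) (by simp) (by simp) (by simp)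
      have hmem2 : p ∈ ({y, z, x, w} : Finset Ω) := by rw [← heq]; simp
      simp [hp1, hp2, hp3, hp4] at hmem2
    have hmv1 : mv y z p = q := mvq y z p q hyz hN
    by_cases hxyp : Col B x y p
    · -- C-B2
      obtain ⟨r, hL'⟩ := line_of_col hD hxy (Ne.symm hp1) (Ne.symm hp2) hxyp
      obtain ⟨-, -, hxr, -, hyr, hpr⟩ := quad_pairwise' hD hL'
      have hcolzxp : Col B z x p :=
        (hpar.mp (iff_of_true hcol hpc)).mp (col_of_mem hL' (by simp) (by simp) (by simp))
      obtain ⟨t, hM⟩ := line_of_col hD hxz (Ne.symm hp1) (Ne.symm hp3) (col_swap hcolzxp)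
      obtain ⟨-, -, hxt, -, hzt, hpt⟩ := quad_pairwise' hD hM
      have hty : t ≠ y := by
        intro hE; rw [hE] at hM
        have heq := lines_eq hss hM hL0 hxy hxz hyz
          (by simp) (by simp) (by simp) (by simp) (by simp) (by simp)
        have hmem2 : p ∈ ({y, z, x, w} : Finset Ω) := by rw [← heq]; simp
        simp [hp1, hp2, hp3, hp4] at hmem2
      have htq : t ≠ q := by
        intro hE; rw [hE] at hM
        have heq := lines_eq hss hM hN (Ne.symm hp3) hzq hpq
          (by simp) (by simp) (by simp) (by simp) (by simp) (by simp)
        have hmem2 : x ∈ ({y, z, p, q} : Finset Ω) := by rw [← heq]; simp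
        simp [hxy, hxz, Ne.symm hp1, Ne.symm hqx] at hmem2
      have hMzp : ({z, p, x, t} : Finset Ω) ∈ B := by
        have e : ({z, p, x, t} : Finset Ω) = {x, z, p, t} := by ext u; simp only [Finset.mem_insert, Finset.mem_singleton]; constructor <;> rintro (rfl | rfl | rfl | rfl) <;> simp
        rw [e]; exact hM
      have hNzp : ({z, p, y, q} : Finset Ω) ∈ B := by
        have e : ({z, p, y, q} : Finset Ω) = {y, z, p, q} := by ext u; simp only [Finset.mem_insert, Finset.mem_singleton]; constructor <;> rintro (rfl | rfl | rfl | rfl) <;> simp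
        rw [e]; exact hN
      have hxtyq : ({x, t, y, q} : Finset Ω) ∈ B :=
        symmdiff_quad hsd (Ne.symm hp3) hMzp hNzp
          hxz (Ne.symm hp1) hxy (Ne.symm hqx)
          hzt.symm hpt.symm hty htq
          hyz (Ne.symm hp2) hzq.symm hpq.symm
      obtain ⟨s, hQ⟩ := line_of_col hD hxy hqx.symm hyq
        (col_of_mem hxtyq (by simp) (by simp) (by simp))
      obtain ⟨-, -, hxs, -, hys, hqs⟩ := quad_pairwise' hD hQ
      have hps : p ≠ s := by
        intro hE; rw [← hE] at hQ
        have heq := lines_eq hss hQ hN (Ne.symm hp2) hyq hpq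
          (by simp) (by simp) (by simp) (by simp) (by simp) (by simp)
        have hmem2 : x ∈ ({y, z, p, q} : Finset Ω) := by rw [← heq]; simp
        simp [hxy, hxz, Ne.symm hp1, Ne.symm hqx] at hmem2
      have hrq : r ≠ q := by
        intro hE; rw [hE] at hL'
        have heq := lines_eq hss hL' hN (Ne.symm hp2) hyq hpq
          (by simp) (by simp) (by simp) (by simp) (by simp) (by simp)
        have hmem2 : x ∈ ({y, z, p, q} : Finset Ω) := by rw [← heq]; simp
        simp [hxy, hxz, Ne.symm hp1, Ne.symm hqx] at hmem2
      have hrs : r ≠ s := by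
        intro hE; rw [hE] at hL'
        have heq := lines_eq hss hL' hQ hxy hxs hys
          (by simp) (by simp) (by simp) (by simp) (by simp) (by simp)
        have hmem2 : p ∈ ({x, y, q, s} : Finset Ω) := by rw [← heq]; simp
        simp [hp1, hp2, hpq, hps] at hmem2
      have hrz : r ≠ z := by
        intro hE; rw [hE] at hL'
        have heq := lines_eq hss hL' hL0 hxy hxz hyz
          (by simp) (by simp) (by simp) (by simp) (by simp) (by simp)
        have hmem2 : p ∈ ({y, z, x, w} : Finset Ω) := by rw [← heq]; simp
        simp [hp1, hp2, hp3, hp4] at hmem2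
      have hsz : s ≠ z := by
        intro hE; rw [hE] at hQ
        have heq := lines_eq hss hQ hL0 hxy hxz hyz
          (by simp) (by simp) (by simp) (by simp) (by simp) (by simp)
        have hmem2 : q ∈ ({y, z, x, w} : Finset Ω) := by rw [← heq]; simp
        simp [hyq.symm, hzq.symm, hqx, hqw] at hmem2
      have hprqs : ({p, r, q, s} : Finset Ω) ∈ B :=
        symmdiff_quad hsd hxy hL' hQ
          hp1 hp2 hpq hps
          hxr.symm hyr.symm hrq hrs
          hqx hyq.symm hxs.symm hys.symm
      have hPQ : ({p, q, r, s} : Finset Ω) ∈ B := by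
        have e : ({p, q, r, s} : Finset Ω) = {p, r, q, s} := by ext u; simp only [Finset.mem_insert, Finset.mem_singleton]; constructor <;> rintro (rfl | rfl | rfl | rfl) <;> simp
        rw [e]; exact hprqs
      have hNpq : ({p, q, y, z} : Finset Ω) ∈ B := by
        have e : ({p, q, y, z} : Finset Ω) = {y, z, p, q} := by ext u; simp only [Finset.mem_insert, Finset.mem_singleton]; constructor <;> rintro (rfl | rfl | rfl | rfl) <;> simp
        rw [e]; exact hN
      have hrsyz : ({r, s, y, z} : Finset Ω) ∈ B :=
        symmdiff_quad hsd hpq hPQ hNpq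
          hpr.symm hrq hyr.symm hrz
          (Ne.symm hps) hqs.symm hys.symm hsz
          (Ne.symm hp2) hyq (Ne.symm hp3) hzq
      have hyzsr : ({y, z, s, r} : Finset Ω) ∈ B := by
        have e : ({y, z, s, r} : Finset Ω) = {r, s, y, z} := by ext u; simp only [Finset.mem_insert, Finset.mem_singleton]; constructor <;> rintro (rfl | rfl | rfl | rfl) <;> simp
        rw [e]; exact hrsyz
      rw [hmv1, mvq x y q s hxy hQ, mvq y z s r hyz hyzsr, mvq x y p r hxy hL']
    · -- C-B1
      have hnxyq : ¬ Col B x y q := by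
        intro hcq
        obtain ⟨r', hR⟩ := line_of_col hD hxy hqx.symm hyq hcq
        obtain ⟨-, -, hxr', -, hyr', hqr'⟩ := quad_pairwise' hD hR
        have hr'z : r' ≠ z := by
          intro hE; rw [hE] at hR
          have heq := lines_eq hss hR hL0 hxy hxz hyz
            (by simp) (by simp) (by simp) (by simp) (by simp) (by simp)
          have hmem2 : q ∈ ({y, z, x, w} : Finset Ω) := by rw [← heq]; simp
          simp [hyq.symm, hzq.symm, hqx, hqw] at hmem2
        have hr'p : r' ≠ p := by
          intro hE; rw [hE] at hR
          have heq := lines_eq hss hR hN (Ne.symm hp2) hyq hpq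
            (by simp) (by simp) (by simp) (by simp) (by simp) (by simp)
          have hmem2 : x ∈ ({y, z, p, q} : Finset Ω) := by rw [← heq]; simp
          simp [hxy, hxz, Ne.symm hp1, Ne.symm hqx] at hmem2
        have hRyq : ({y, q, x, r'} : Finset Ω) ∈ B := by
          have e : ({y, q, x, r'} : Finset Ω) = {x, y, q, r'} := by ext u; simp only [Finset.mem_insert, Finset.mem_singleton]; constructor <;> rintro (rfl | rfl | rfl | rfl) <;> simp
          rw [e]; exact hR
        have hNyq : ({y, q, z, p} : Finset Ω) ∈ B := by
          have e : ({y, q, z, p} : Finset Ω) = {y, z, p, q} := by ext u; simp only [Finset.mem_insert, Finset.mem_singleton]; constructor <;> rintro (rfl | rfl | rfl | rfl) <;> simp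
          rw [e]; exact hN
        have hxzp : ({x, r', z, p} : Finset Ω) ∈ B :=
          symmdiff_quad hsd hyq hRyq hNyq
            hxy (Ne.symm hqx) hxz (Ne.symm hp1)
            hyr'.symm hqr'.symm hr'z hr'p
            hyz.symm hzq hp2 hpq
        have hcolzxp : Col B z x p := col_of_mem hxzp (by simp) (by simp) (by simp)
        exact hxyp (col_swap ((hpar.mp (iff_of_true hcol hpc)).mpr hcolzxp))
      have hNq : ({y, z, q, p} : Finset Ω) ∈ B := by
        have e : ({y, z, q, p} : Finset Ω) = {y, z, p, q} := by ext u; simp only [Finset.mem_insert, Finset.mem_singleton]; constructor <;> rintro (rfl | rfl | rfl | rfl) <;> simp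
        rw [e]; exact hN
      rw [hmv1, mvfix x y q hxy hqx hyq.symm hnxyq, mvq y z q p hyz hNq,
        mvfix x y p hxy hp1 hp2 hxyp]
  · -- p not collinear with y, z
    have hmv1 : mv y z p = p := mvfix y z p hyz hp2 hp3 hpc
    by_cases hxyp : Col B x y p
    · -- C-A2
      obtain ⟨u, hLu⟩ := line_of_col hD hxy (Ne.symm hp1) (Ne.symm hp2) hxyp
      obtain ⟨-, -, hxu, -, hyu, hpu⟩ := quad_pairwise' hD hLu
      have huz : u ≠ z := by
        intro hE; rw [hE] at hLu
        have heq := lines_eq hss hLu hL0 hxy hxz hyz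
          (by simp) (by simp) (by simp) (by simp) (by simp) (by simp)
        have hmem2 : p ∈ ({y, z, x, w} : Finset Ω) := by rw [← heq]; simp
        simp [hp1, hp2, hp3, hp4] at hmem2
      have huw : u ≠ w := by
        intro hE; rw [hE] at hLu
        have heq := lines_eq hss hLu hL0 hxy hxw hyw
          (by simp) (by simp) (by simp) (by simp) (by simp) (by simp)
        have hmem2 : p ∈ ({y, z, x, w} : Finset Ω) := by rw [← heq]; simp
        simp [hp1, hp2, hp3, hp4] at hmem2
      have hnzxp : ¬ Col B z x p := by
        intro hc
        have hA : ¬ (Col B y z x ↔ Col B y z p) := fun ha => hpc (ha.mp hcol)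
        exact hA (hpar.mpr (iff_of_true (col_swap hxyp) hc))
      have hnyzu : ¬ Col B y z u := by
        intro hc
        obtain ⟨s, hK⟩ := line_of_col hD hyz hyu huz.symm hc
        obtain ⟨-, -, hys, -, hzs, hus⟩ := quad_pairwise' hD hK
        have hsx : s ≠ x := by
          intro hE; rw [hE] at hK
          have heq := lines_eq hss hK hL0 hyz hxy.symm hxz.symm
            (by simp) (by simp) (by simp) (by simp) (by simp) (by simp)
          have hmem2 : u ∈ ({y, z, x, w} : Finset Ω) := by rw [← heq]; simp
          simp [hyu.symm, huz, hxu.symm, huw] at hmem2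
        have hsp : s ≠ p := by
          intro hE; rw [hE] at hK
          exact hpc (col_of_mem hK (by simp) (by simp) (by simp))
        have hKyu : ({y, u, z, s} : Finset Ω) ∈ B := by
          have e : ({y, u, z, s} : Finset Ω) = {y, z, u, s} := by ext v; simp only [Finset.mem_insert, Finset.mem_singleton]; constructor <;> rintro (rfl | rfl | rfl | rfl) <;> simp
          rw [e]; exact hK
        have hLuyu : ({y, u, x, p} : Finset Ω) ∈ B := by
          have e : ({y, u, x, p} : Finset Ω) = {x, y, p, u} := by ext v; simp only [Finset.mem_insert, Finset.mem_singleton]; constructor <;> rintro (rfl | rfl | rfl | rfl) <;> simp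
          rw [e]; exact hLu
        have hzsxp : ({z, s, x, p} : Finset Ω) ∈ B :=
          symmdiff_quad hsd hyu hKyu hLuyu
            hyz.symm huz.symm hxz.symm (Ne.symm hp3)
            hys.symm hus.symm hsx hsp
            hxy hxu hp2 hpu
        exact hnzxp (col_of_mem hzsxp (by simp) (by simp) (by simp))
      rw [hmv1, mvq x y p u hxy hLu, mvfix y z u hyz hyu.symm huz hnyzu]
    · -- C-A1
      rw [hmv1, mvfix x y p hxy hp1 hp2 hxyp, hmv1]

set_option maxHeartbeats 16000000 in
lemma elemMove_conj_part2    [Fintype Ω] [DecidableEq Ω] {B : Set (Finset Ω)} {n lam : ℕ}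
    (hD : IsDesign B n lam) (hss : Supersimple B) (hsd : SymmDiffCond B)
    (hRT : IsRegularTwoGraph (collinearTriples B))
    (mv : Ω → Ω → Equiv.Perm Ω) (hmv : IsElemMoveFn B mv)
    (x y z : Ω) (hxy : x ≠ y) (hyz : y ≠ z) (hxz : x ≠ z)
    (hNC : ¬ Col B y z x) : mv y z * mv x y * mv y z = mv x z := by
  obtain ⟨hmv0, hmv2⟩ := hmv
  have mvq : ∀ a b u v : Ω, a ≠ b → ({a, b, u, v} : Finset Ω) ∈ B → mv a b u = v :=
    fun a b u v h hq => (hmv2 a b h).2.2.1 u v hq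
  have mvfix : ∀ a b u : Ω, a ≠ b → u ≠ a → u ≠ b → ¬ Col B a b u → mv a b u = u :=
    fun a b u h h1 h2 hc => (hmv2 a b h).2.2.2 u h1 h2 (fun L hL hm => hc ⟨L, hL, hm⟩)
  have mvA : ∀ a b : Ω, a ≠ b → mv a b a = b := fun a b h => (hmv2 a b h).1
  have mvB : ∀ a b : Ω, a ≠ b → mv a b b = a := fun a b h => (hmv2 a b h).2.1
  have hnxyz : ¬ Col B x y z := fun ⟨L, hL, h1, h2, h3⟩ => hNC ⟨L, hL, h2, h3, h1⟩
  have hnxzy : ¬ Col B x z y := fun ⟨L, hL, h1, h2, h3⟩ => hNC ⟨L, hL, h3, h2, h1⟩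
  have hfx : mv y z x = x := mvfix y z x hyz hxy hxz hNC
  have hfz : mv x y z = z := mvfix x y z hxy hxz.symm hyz.symm hnxyz
  have hfy : mv x z y = y := mvfix x z y hxz hxy.symm hyz hnxzy
  ext p
  simp only [Equiv.Perm.mul_apply]
  by_cases hp1 : p = x
  · rw [hp1, hfx, mvA x y hxy, mvA y z hyz, mvA x z hxz]
  by_cases hp2 : p = y
  · rw [hp2, mvA y z hyz, hfz, mvB y z hyz, hfy]
  by_cases hp3 : p = z
  · rw [hp3, mvB y z hyz, mvB x y hxy, hfx, mvB x z hxz]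
  have hpar := two_graph_parity hRT (a := y) (b := z) (c := x) (d := p)
    hyz hxy.symm (Ne.symm hp2) hxz.symm (Ne.symm hp3) (Ne.symm hp1)
  by_cases hpc : Col B y z p
  · obtain ⟨q, hN⟩ := line_of_col hD hyz (Ne.symm hp2) (Ne.symm hp3) hpc
    obtain ⟨-, -, hyq, -, hzq, hpq⟩ := quad_pairwise' hD hN
    have hqx : q ≠ x := by
      intro hE; rw [hE] at hN
      exact hNC (col_of_mem hN (by simp) (by simp) (by simp))
    have hmv1 : mv y z p = q := mvq y z p q hyz hN
    have hparq := two_graph_parity hRT (a := y) (b := z) (c := x) (d := q)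
      hyz hxy.symm hyq hxz.symm hzq hqx.symm
    have hcolyzq : Col B y z q := col_of_mem hN (by simp) (by simp) (by simp)
    by_cases hq2 : Col B x y q
    · -- B-i
      obtain ⟨r, hL'⟩ := line_of_col hD hxy hqx.symm hyq hq2
      obtain ⟨-, -, hxr, -, hyr, hqr⟩ := quad_pairwise' hD hL'
      have hrz : r ≠ z := by
        intro hE; rw [hE] at hL'
        exact hNC (col_of_mem hL' (by simp) (by simp) (by simp))
      have hrp : r ≠ p := by
        intro hE; rw [hE] at hL'
        have heq := lines_eq hss hL' hN (Ne.symm hp2) hyq hpq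
          (by simp) (by simp) (by simp) (by simp) (by simp) (by simp)
        have hmem2 : x ∈ ({y, z, p, q} : Finset Ω) := by rw [← heq]; simp
        simp [hxy, hxz, Ne.symm hp1, Ne.symm hqx] at hmem2
      have hnxzq : ¬ Col B x z q := by
        intro hc
        have hA : ¬ (Col B y z x ↔ Col B y z q) := fun ha => hNC (ha.mpr hcolyzq)
        exact hA (hparq.mpr (iff_of_true (col_swap hq2) (col_swap hc)))
      have hnyzr : ¬ Col B y z r := by
        intro hc
        obtain ⟨s, hK⟩ := line_of_col hD hyz hyr hrz.symm hc
        obtain ⟨-, -, hys, -, hzs, hrs⟩ := quad_pairwise' hD hK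
        have hsx : s ≠ x := by
          intro hE; rw [hE] at hK
          exact hNC (col_of_mem hK (by simp) (by simp) (by simp))
        have hsq : s ≠ q := by
          intro hE; rw [hE] at hK
          have heq := lines_eq hss hK hN hyz hyq hzq
            (by simp) (by simp) (by simp) (by simp) (by simp) (by simp)
          have hmem2 : r ∈ ({y, z, p, q} : Finset Ω) := by rw [← heq]; simp
          simp [hyr.symm, hrz, hrp, hqr.symm] at hmem2
        have hKyr : ({y, r, z, s} : Finset Ω) ∈ B := by
          have e : ({y, r, z, s} : Finset Ω) = {y, z, r, s} := by ext u; simp only [Finset.mem_insert, Finset.mem_singleton]; constructor <;> rintro (rfl | rfl | rfl | rfl) <;> simp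
          rw [e]; exact hK
        have hLyr : ({y, r, x, q} : Finset Ω) ∈ B := by
          have e : ({y, r, x, q} : Finset Ω) = {x, y, q, r} := by ext u; simp only [Finset.mem_insert, Finset.mem_singleton]; constructor <;> rintro (rfl | rfl | rfl | rfl) <;> simp
          rw [e]; exact hL'
        have hzsxq : ({z, s, x, q} : Finset Ω) ∈ B :=
          symmdiff_quad hsd hyr hKyr hLyr
            hyz.symm hrz.symm hxz.symm hzq
            hys.symm hrs.symm hsx hsq
            hxy hxr hyq.symm hqr
        exact hnxzq (col_of_mem hzsxq (by simp) (by simp) (by simp))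
      have hNyq : ({y, q, z, p} : Finset Ω) ∈ B := by
        have e : ({y, q, z, p} : Finset Ω) = {y, z, p, q} := by ext u; simp only [Finset.mem_insert, Finset.mem_singleton]; constructor <;> rintro (rfl | rfl | rfl | rfl) <;> simp
        rw [e]; exact hN
      have hLyq : ({y, q, x, r} : Finset Ω) ∈ B := by
        have e : ({y, q, x, r} : Finset Ω) = {x, y, q, r} := by ext u; simp only [Finset.mem_insert, Finset.mem_singleton]; constructor <;> rintro (rfl | rfl | rfl | rfl) <;> simp
        rw [e]; exact hL'
      have hzpxr : ({z, p, x, r} : Finset Ω) ∈ B :=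
        symmdiff_quad hsd hyq hNyq hLyq
          hyz.symm hzq hxz.symm hrz.symm
          hp2 hpq hp1 (Ne.symm hrp)
          hxy (Ne.symm hqx) hyr.symm hqr.symm
      have hxzpr : ({x, z, p, r} : Finset Ω) ∈ B := by
        have e : ({x, z, p, r} : Finset Ω) = {z, p, x, r} := by ext u; simp only [Finset.mem_insert, Finset.mem_singleton]; constructor <;> rintro (rfl | rfl | rfl | rfl) <;> simp
        rw [e]; exact hzpxr
      rw [hmv1, mvq x y q r hxy hL', mvfix y z r hyz hyr.symm hrz hnyzr,
        mvq x z p r hxz hxzpr]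
    · -- B-ii
      have hnxzp : ¬ Col B x z p := by
        intro hc
        obtain ⟨t, hM⟩ := line_of_col hD hxz (Ne.symm hp1) (Ne.symm hp3) hc
        obtain ⟨-, -, hxt, -, hzt, hpt⟩ := quad_pairwise' hD hM
        have hty : t ≠ y := by
          intro hE; rw [hE] at hM
          exact hNC (col_of_mem hM (by simp) (by simp) (by simp))
        have htq : t ≠ q := by
          intro hE; rw [hE] at hM
          have heq := lines_eq hss hM hN (Ne.symm hp3) hzq hpq
            (by simp) (by simp) (by simp) (by simp) (by simp) (by simp)
          have hmem2 : x ∈ ({y, z, p, q} : Finset Ω) := by rw [← heq]; simp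
          simp [hxy, hxz, Ne.symm hp1, Ne.symm hqx] at hmem2
        have hMzp : ({z, p, x, t} : Finset Ω) ∈ B := by
          have e : ({z, p, x, t} : Finset Ω) = {x, z, p, t} := by ext u; simp only [Finset.mem_insert, Finset.mem_singleton]; constructor <;> rintro (rfl | rfl | rfl | rfl) <;> simp
          rw [e]; exact hM
        have hNzp : ({z, p, y, q} : Finset Ω) ∈ B := by
          have e : ({z, p, y, q} : Finset Ω) = {y, z, p, q} := by ext u; simp only [Finset.mem_insert, Finset.mem_singleton]; constructor <;> rintro (rfl | rfl | rfl | rfl) <;> simp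
          rw [e]; exact hN
        have hxtyq : ({x, t, y, q} : Finset Ω) ∈ B :=
          symmdiff_quad hsd (Ne.symm hp3) hMzp hNzp
            hxz (Ne.symm hp1) hxy (Ne.symm hqx)
            hzt.symm hpt.symm hty htq
            hyz (Ne.symm hp2) hzq.symm hpq.symm
        exact hq2 (col_of_mem hxtyq (by simp) (by simp) (by simp))
      have hNq : ({y, z, q, p} : Finset Ω) ∈ B := by
        have e : ({y, z, q, p} : Finset Ω) = {y, z, p, q} := by ext u; simp only [Finset.mem_insert, Finset.mem_singleton]; constructor <;> rintro (rfl | rfl | rfl | rfl) <;> simp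
        rw [e]; exact hN
      rw [hmv1, mvfix x y q hxy hqx hyq.symm hq2, mvq y z q p hyz hNq,
        mvfix x z p hxz hp1 hp3 hnxzp]
  · -- A : p not collinear with y,z
    have hmv1 : mv y z p = p := mvfix y z p hyz hp2 hp3 hpc
    by_cases hxyp : Col B x y p
    · -- A2
      obtain ⟨u, hLu⟩ := line_of_col hD hxy (Ne.symm hp1) (Ne.symm hp2) hxyp
      obtain ⟨-, -, hxu, -, hyu, hpu⟩ := quad_pairwise' hD hLu
      have huz : u ≠ z := by
        intro hE; rw [hE] at hLu
        exact hNC (col_of_mem hLu (by simp) (by simp) (by simp))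
      have hcolxzp : Col B x z p := by
        have hA : (Col B y z x ↔ Col B y z p) := iff_of_false hNC hpc
        exact col_swap ((hpar.mp hA).mp (col_swap hxyp))
      obtain ⟨v, hMv⟩ := line_of_col hD hxz (Ne.symm hp1) (Ne.symm hp3) hcolxzp
      obtain ⟨-, -, hxv, -, hzv, hpv⟩ := quad_pairwise' hD hMv
      have hvy : v ≠ y := by
        intro hE; rw [hE] at hMv
        exact hNC (col_of_mem hMv (by simp) (by simp) (by simp))
      have huv : u ≠ v := by
        intro hE; rw [hE] at hLu
        have heq := lines_eq hss hLu hMv (Ne.symm hp1) hxv hpv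
          (by simp) (by simp) (by simp) (by simp) (by simp) (by simp)
        have hmem2 : y ∈ ({x, z, p, v} : Finset Ω) := by rw [← heq]; simp
        simp [hxy.symm, hyz, Ne.symm hp2, hvy.symm] at hmem2
      have hLxp : ({x, p, y, u} : Finset Ω) ∈ B := by
        have e : ({x, p, y, u} : Finset Ω) = {x, y, p, u} := by ext o; simp only [Finset.mem_insert, Finset.mem_singleton]; constructor <;> rintro (rfl | rfl | rfl | rfl) <;> simp
        rw [e]; exact hLu
      have hMxp : ({x, p, z, v} : Finset Ω) ∈ B := by
        have e : ({x, p, z, v} : Finset Ω) = {x, z, p, v} := by ext o; simp only [Finset.mem_insert, Finset.mem_singleton]; constructor <;> rintro (rfl | rfl | rfl | rfl) <;> simp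
        rw [e]; exact hMv
      have hyuzv : ({y, u, z, v} : Finset Ω) ∈ B :=
        symmdiff_quad hsd (Ne.symm hp1) hLxp hMxp
          hxy.symm (Ne.symm hp2) hyz hvy.symm
          hxu.symm hpu.symm huz huv
          hxz.symm (Ne.symm hp3) hxv.symm hpv.symm
      have hyzuv : ({y, z, u, v} : Finset Ω) ∈ B := by
        have e : ({y, z, u, v} : Finset Ω) = {y, u, z, v} := by ext o; simp only [Finset.mem_insert, Finset.mem_singleton]; constructor <;> rintro (rfl | rfl | rfl | rfl) <;> simp
        rw [e]; exact hyuzv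
      rw [hmv1, mvq x y p u hxy hLu, mvq y z u v hyz hyzuv, mvq x z p v hxz hMv]
    · -- A1
      have hnxzp : ¬ Col B x z p := by
        intro hc
        have hA : (Col B y z x ↔ Col B y z p) := iff_of_false hNC hpc
        exact hxyp (col_swap ((hpar.mp hA).mpr (col_swap hc)))
      rw [hmv1, mvfix x y p hxy hp1 hp2 hxyp, hmv1, mvfix x z p hxz hp1 hp3 hnxzp]

/-- Lemma 4.4: under Hypotheses 4.1, for pairwise distinct `x,y,z`,
`[y,z][x,y][y,z]` equals `[x,y]` if `x ∈ \overline{y,z}`, and `[x,z]` otherwise. -/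
theorem elemMove_conj_formula [Fintype Ω] [DecidableEq Ω]
    {B : Set (Finset Ω)} {n lam : ℕ}
    (hD : IsDesign B n lam) (hss : Supersimple B) (hsd : SymmDiffCond B)
    (hRT : IsRegularTwoGraph (collinearTriples B))
    (mv : Ω → Ω → Equiv.Perm Ω) (hmv : IsElemMoveFn B mv)
    (x y z : Ω) (hxy : x ≠ y) (hyz : y ≠ z) (hxz : x ≠ z) :
    (x ∈ lineJoin B y z → mv y z * mv x y * mv y z = mv x y) ∧
    (x ∉ lineJoin B y z → mv y z * mv x y * mv y z = mv x z) :=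
  ⟨fun hmem => elemMove_conj_part1 hD hss hsd hRT mv hmv x y z hxy hyz hxz hmem,
   fun hmem => elemMove_conj_part2 hD hss hsd hRT mv hmv x y z hxy hyz hxz hmem⟩
end

section
/- Assume Hypotheses 4.1. For pairwise distinct x,y,z ∈ Ω: (a) the order of the permutation [x,y]·[y,z] is 2 if x ∈ \overline{y,z}, and is 3 if x ∉ \overline{y,z}; (b) if x ∉ \overline{y,z} then [z,x]·[x,y]·[y,z] = [x,y]. -/
open Equiv

variable {Ω : Type*}

section Statement12Helpers

variable {Ω' : Type*} [DecidableEq Ω'] {B : Set (Finset Ω')}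

private lemma card3' {a b c : Ω'} (hab : a ≠ b) (hac : a ≠ c) (hbc : b ≠ c) :
    ({a, b, c} : Finset Ω').card = 3 := by
  rw [Finset.card_insert_of_notMem (by simp [hab, hac]),
      Finset.card_insert_of_notMem (by simp [hbc]), Finset.card_singleton]

private lemma card4' {a b c d : Ω'} (hab : a ≠ b) (hac : a ≠ c) (had : a ≠ d)
    (hbc : b ≠ c) (hbd : b ≠ d) (hcd : c ≠ d) :
    ({a, b, c, d} : Finset Ω').card = 4 := by
  rw [Finset.card_insert_of_notMem (by simp [hab, hac, had]), card3' hbc hbd hcd]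

private lemma card4_not_sub3 {s : Finset Ω'} (h4 : s.card = 4) {u v w : Ω'}
    (hsub : s ⊆ {u, v, w}) : False := by
  have h1 := Finset.card_le_card hsub
  have h2 : ({u, v, w} : Finset Ω').card ≤ 3 := by
    refine le_trans (Finset.card_insert_le _ _) ?_
    have := Finset.card_insert_le v ({w} : Finset Ω')
    simp at this ⊢; omega
  omega

private lemma quad_ne' (h4c : ∀ L ∈ B, L.card = 4) {a b c d : Ω'}
    (h : ({a, b, c, d} : Finset Ω') ∈ B) :
    a ≠ b ∧ a ≠ c ∧ a ≠ d ∧ b ≠ c ∧ b ≠ d ∧ c ≠ d := by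
  have h4 := h4c _ h
  refine ⟨?_, ?_, ?_, ?_, ?_, ?_⟩ <;> rintro rfl
  · exact card4_not_sub3 h4 (by intro p hp; simp at hp ⊢; tauto)
  · exact card4_not_sub3 (u := a) (v := b) (w := d) h4 (by intro p hp; simp at hp ⊢; tauto)
  · exact card4_not_sub3 (u := a) (v := b) (w := c) h4 (by intro p hp; simp at hp ⊢; tauto)
  · exact card4_not_sub3 (u := a) (v := b) (w := d) h4 (by intro p hp; simp at hp ⊢; tauto)
  · exact card4_not_sub3 (u := a) (v := b) (w := c) h4 (by intro p hp; simp at hp ⊢; tauto)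
  · exact card4_not_sub3 (u := a) (v := b) (w := c) h4 (by intro p hp; simp at hp ⊢; tauto)

/-- Two lines sharing three distinct points are equal. -/
private lemma line_eq' (hss : Supersimple B) {L₁ L₂ : Finset Ω'}
    (h1 : L₁ ∈ B) (h2 : L₂ ∈ B) {a b c : Ω'}
    (hab : a ≠ b) (hac : a ≠ c) (hbc : b ≠ c)
    (ha1 : a ∈ L₁) (hb1 : b ∈ L₁) (hc1 : c ∈ L₁)
    (ha2 : a ∈ L₂) (hb2 : b ∈ L₂) (hc2 : c ∈ L₂) : L₁ = L₂ := by
  by_contra hne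
  have hle := hss L₁ h1 L₂ h2 hne
  have hsub : ({a, b, c} : Finset Ω') ⊆ L₁ ∩ L₂ := by
    intro p hp; simp only [Finset.mem_insert, Finset.mem_singleton] at hp
    rcases hp with rfl | rfl | rfl <;> simp [Finset.mem_inter, *]
  have := Finset.card_le_card hsub
  rw [card3' hab hac hbc] at this
  omega

/-- A line containing three distinct points is of the form `{a,b,c,d}`. -/
private lemma fourth' (h4c : ∀ L ∈ B, L.card = 4) {L : Finset Ω'} (hL : L ∈ B)
    {a b c : Ω'} (hab : a ≠ b) (hac : a ≠ c) (hbc : b ≠ c)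
    (ha : a ∈ L) (hb : b ∈ L) (hc : c ∈ L) :
    ∃ d, ({a, b, c, d} : Finset Ω') ∈ B ∧ d ≠ a ∧ d ≠ b ∧ d ≠ c := by
  have h4 := h4c L hL
  have hsub : ({a, b, c} : Finset Ω') ⊆ L := by
    intro p hp; simp only [Finset.mem_insert, Finset.mem_singleton] at hp
    rcases hp with rfl | rfl | rfl <;> assumption
  have hex : ∃ d ∈ L, d ∉ ({a, b, c} : Finset Ω') := by
    by_contra hcon
    push_neg at hcon
    have hsub2 : L ⊆ ({a, b, c} : Finset Ω') := hcon
    have := Finset.card_le_card hsub2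
    rw [h4, card3' hab hac hbc] at this; omega
  obtain ⟨d, hdL, hd3⟩ := hex
  simp only [Finset.mem_insert, Finset.mem_singleton, not_or] at hd3
  obtain ⟨hda, hdb, hdc⟩ := hd3
  have hsub2 : insert d ({a, b, c} : Finset Ω') ⊆ L := by
    intro p hp; simp only [Finset.mem_insert, Finset.mem_singleton] at hp
    rcases hp with rfl | rfl | rfl | rfl <;> assumption
  have hcard : (insert d ({a, b, c} : Finset Ω')).card = 4 := by
    rw [Finset.card_insert_of_notMem (by simp [hda, hdb, hdc]), card3' hab hac hbc]
  have hLeq : L = insert d ({a, b, c} : Finset Ω') :=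
    (Finset.eq_of_subset_of_card_le hsub2 (by rw [h4, hcard])).symm
  have hfin : L = ({a, b, c, d} : Finset Ω') := by
    rw [hLeq]; ext p; simp only [Finset.mem_insert, Finset.mem_singleton]; tauto
  exact ⟨d, hfin ▸ hL, hda, hdb, hdc⟩

private lemma join_quad (h4c : ∀ L ∈ B, L.card = 4) {a b p : Ω'}
    (hab : a ≠ b) (hpa : p ≠ a) (hpb : p ≠ b) (h : p ∈ lineJoin B a b) :
    ∃ q, ({a, b, p, q} : Finset Ω') ∈ B ∧ q ≠ a ∧ q ≠ b ∧ q ≠ p := by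
  obtain ⟨L, hL, h1, h2, h3⟩ := h
  exact fourth' h4c hL hab hpa.symm hpb.symm h1 h2 h3

/-- Condition (△) in usable form: two lines sharing exactly the pair `{a,b}`. -/
private lemma symmdiff_line' (h4c : ∀ L ∈ B, L.card = 4) (hsd : SymmDiffCond B)
    {a b c d e f : Ω'} (h1 : ({a, b, c, d} : Finset Ω') ∈ B)
    (h2 : ({a, b, e, f} : Finset Ω') ∈ B)
    (hce : c ≠ e) (hcf : c ≠ f) (hde : d ≠ e) (hdf : d ≠ f) :
    ({c, d, e, f} : Finset Ω') ∈ B := by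
  obtain ⟨hab, hac, had, hbc, hbd, hcd⟩ := quad_ne' h4c h1
  obtain ⟨-, hae, haf, hbe, hbf, hef⟩ := quad_ne' h4c h2
  have hinter : (({a, b, c, d} : Finset Ω') ∩ {a, b, e, f}) = {a, b} := by
    ext p
    simp only [Finset.mem_inter, Finset.mem_insert, Finset.mem_singleton]
    constructor
    · rintro ⟨hp1, hp2⟩
      rcases hp1 with rfl | rfl | rfl | rfl
      · exact Or.inl rfl
      · exact Or.inr rfl
      · exfalso; rcases hp2 with h | h | h | h
        exacts [hac h.symm, hbc h.symm, hce h, hcf h]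
      · exfalso; rcases hp2 with h | h | h | h
        exacts [had h.symm, hbd h.symm, hde h, hdf h]
    · rintro (rfl | rfl) <;> simp
  have hcard : (({a, b, c, d} : Finset Ω') ∩ {a, b, e, f}).card = 2 := by
    rw [hinter]; exact Finset.card_pair hab
  have hmem := hsd _ h1 _ h2 hcard
  have hsymm : symmDiff ({a, b, c, d} : Finset Ω') ({a, b, e, f} : Finset Ω') = {c, d, e, f} := by
    ext p
    simp only [Finset.mem_symmDiff, Finset.mem_insert, Finset.mem_singleton]
    constructor
    · rintro (⟨h1', h2'⟩ | ⟨h1', h2'⟩)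
      · rcases h1' with rfl | rfl | rfl | rfl
        · exact absurd (Or.inl rfl) h2'
        · exact absurd (Or.inr (Or.inl rfl)) h2'
        · exact Or.inl rfl
        · exact Or.inr (Or.inl rfl)
      · rcases h1' with rfl | rfl | rfl | rfl
        · exact absurd (Or.inl rfl) h2'
        · exact absurd (Or.inr (Or.inl rfl)) h2'
        · exact Or.inr (Or.inr (Or.inl rfl))
        · exact Or.inr (Or.inr (Or.inr rfl))
    · rintro (rfl | rfl | rfl | rfl)
      · refine Or.inl ⟨Or.inr (Or.inr (Or.inl rfl)), ?_⟩
        rintro (h | h | h | h); exacts [hac h.symm, hbc h.symm, hce h, hcf h]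
      · refine Or.inl ⟨Or.inr (Or.inr (Or.inr rfl)), ?_⟩
        rintro (h | h | h | h); exacts [had h.symm, hbd h.symm, hde h, hdf h]
      · refine Or.inr ⟨Or.inr (Or.inr (Or.inl rfl)), ?_⟩
        rintro (h | h | h | h); exacts [hae h.symm, hbe h.symm, hce h.symm, hde h.symm]
      · refine Or.inr ⟨Or.inr (Or.inr (Or.inr rfl)), ?_⟩
        rintro (h | h | h | h); exacts [haf h.symm, hbf h.symm, hcf h.symm, hdf h.symm]
  rwa [hsymm] at hmem

private lemma triple_iff {u v w : Ω'} (huv : u ≠ v) (huw : u ≠ w) (hvw : v ≠ w) :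
    ({u, v, w} : Finset Ω') ∈ collinearTriples B ↔ ∃ L ∈ B, u ∈ L ∧ v ∈ L ∧ w ∈ L := by
  constructor
  · rintro ⟨-, L, hL, hsub⟩
    exact ⟨L, hL, hsub (by simp), hsub (by simp), hsub (by simp)⟩
  · rintro ⟨L, hL, h1, h2, h3⟩
    refine ⟨card3' huv huw hvw, L, hL, ?_⟩
    intro p hp; simp only [Finset.mem_insert, Finset.mem_singleton] at hp
    rcases hp with rfl | rfl | rfl <;> assumption

private lemma triple_sub {a b c d : Ω'} (hab : a ≠ b) (hac : a ≠ c) (had : a ≠ d)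
    (hbc : b ≠ c) (hbd : b ≠ d) (hcd : c ≠ d) {t : Finset Ω'}
    (ht : t ⊆ ({a, b, c, d} : Finset Ω')) (h3 : t.card = 3) :
    t = {a, b, c} ∨ t = {a, b, d} ∨ t = {a, c, d} ∨ t = {b, c, d} := by
  classical
  have hq4 : ({a, b, c, d} : Finset Ω').card = 4 := card4' hab hac had hbc hbd hcd
  have hsd1 : (({a, b, c, d} : Finset Ω') \ t).card = 1 := by
    rw [Finset.card_sdiff_of_subset ht, hq4, h3]
  obtain ⟨u, hu⟩ := Finset.card_eq_one.mp hsd1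
  have ht' : t = ({a, b, c, d} : Finset Ω') \ {u} := by
    rw [← hu, Finset.sdiff_sdiff_self_left, Finset.inter_eq_right.mpr ht]
  have hu4 : u ∈ ({a, b, c, d} : Finset Ω') := by
    have h1 : u ∈ ({a, b, c, d} : Finset Ω') \ t := hu ▸ Finset.mem_singleton_self u
    exact (Finset.mem_sdiff.mp h1).1
  simp only [Finset.mem_insert, Finset.mem_singleton] at hu4
  rcases hu4 with rfl | rfl | rfl | rfl
  · refine Or.inr (Or.inr (Or.inr ?_))
    rw [ht']; ext p
    simp only [Finset.mem_sdiff, Finset.mem_insert, Finset.mem_singleton]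
    constructor
    · rintro ⟨h | h | h | h, h2⟩
      exacts [absurd h h2, Or.inl h, Or.inr (Or.inl h), Or.inr (Or.inr h)]
    · rintro (rfl | rfl | rfl)
      exacts [⟨Or.inr (Or.inl rfl), fun h => hab h.symm⟩,
        ⟨Or.inr (Or.inr (Or.inl rfl)), fun h => hac h.symm⟩,
        ⟨Or.inr (Or.inr (Or.inr rfl)), fun h => had h.symm⟩]
  · refine Or.inr (Or.inr (Or.inl ?_))
    rw [ht']; ext p
    simp only [Finset.mem_sdiff, Finset.mem_insert, Finset.mem_singleton]
    constructor
    · rintro ⟨h | h | h | h, h2⟩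
      exacts [Or.inl h, absurd h h2, Or.inr (Or.inl h), Or.inr (Or.inr h)]
    · rintro (rfl | rfl | rfl)
      exacts [⟨Or.inl rfl, hab⟩,
        ⟨Or.inr (Or.inr (Or.inl rfl)), fun h => hbc h.symm⟩,
        ⟨Or.inr (Or.inr (Or.inr rfl)), fun h => hbd h.symm⟩]
  · refine Or.inr (Or.inl ?_)
    rw [ht']; ext p
    simp only [Finset.mem_sdiff, Finset.mem_insert, Finset.mem_singleton]
    constructor
    · rintro ⟨h | h | h | h, h2⟩
      exacts [Or.inl h, Or.inr (Or.inl h), absurd h h2, Or.inr (Or.inr h)]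
    · rintro (rfl | rfl | rfl)
      exacts [⟨Or.inl rfl, hac⟩, ⟨Or.inr (Or.inl rfl), hbc⟩,
        ⟨Or.inr (Or.inr (Or.inr rfl)), fun h => hcd h.symm⟩]
  · refine Or.inl ?_
    rw [ht']; ext p
    simp only [Finset.mem_sdiff, Finset.mem_insert, Finset.mem_singleton]
    constructor
    · rintro ⟨h | h | h | h, h2⟩
      exacts [Or.inl h, Or.inr (Or.inl h), Or.inr (Or.inr h), absurd h h2]
    · rintro (rfl | rfl | rfl)
      exacts [⟨Or.inl rfl, had⟩, ⟨Or.inr (Or.inl rfl), hbd⟩,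
        ⟨Or.inr (Or.inr (Or.inl rfl)), hcd⟩]

private lemma parity4 (hRT : IsRegularTwoGraph (collinearTriples B))
    {a b c d : Ω'} (hab : a ≠ b) (hac : a ≠ c) (had : a ≠ d)
    (hbc : b ≠ c) (hbd : b ≠ d) (hcd : c ≠ d) :
    (({a, b, c} : Finset Ω') ∈ collinearTriples B ↔
      (({a, b, d} : Finset Ω') ∈ collinearTriples B ↔
        (({a, c, d} : Finset Ω') ∈ collinearTriples B ↔
          ({b, c, d} : Finset Ω') ∈ collinearTriples B))) := by
  classical
  have hq4 : ({a, b, c, d} : Finset Ω').card = 4 := card4' hab hac had hbc hbd hcd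
  have hcount := hRT.2.2 {a, b, c, d} hq4
  have hset : {t ∈ collinearTriples B | t ⊆ ({a, b, c, d} : Finset Ω')} =
      (↑((({ {a, b, c}, {a, b, d}, {a, c, d}, {b, c, d} } : Finset (Finset Ω'))).filter
        (fun t => t ∈ collinearTriples B)) : Set (Finset Ω')) := by
    ext t
    simp only [Set.mem_setOf_eq, Finset.coe_filter, Finset.mem_insert, Finset.mem_singleton]
    constructor
    · rintro ⟨htC, hsub⟩
      exact ⟨triple_sub hab hac had hbc hbd hcd hsub (hRT.1 t htC), htC⟩
    · rintro ⟨hd, htC⟩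
      refine ⟨htC, ?_⟩
      rcases hd with rfl | rfl | rfl | rfl <;>
        · intro u hu; simp only [Finset.mem_insert, Finset.mem_singleton] at hu ⊢; tauto
  rw [hset, Set.ncard_coe_finset] at hcount
  have ne12 : ({a, b, c} : Finset Ω') ≠ {a, b, d} := by
    intro h
    have hc : c ∈ ({a, b, d} : Finset Ω') := by rw [← h]; simp
    simp only [Finset.mem_insert, Finset.mem_singleton] at hc
    rcases hc with h' | h' | h'; exacts [hac h'.symm, hbc h'.symm, hcd h']
  have ne13 : ({a, b, c} : Finset Ω') ≠ {a, c, d} := by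
    intro h
    have hc : b ∈ ({a, c, d} : Finset Ω') := by rw [← h]; simp
    simp only [Finset.mem_insert, Finset.mem_singleton] at hc
    rcases hc with h' | h' | h'; exacts [hab h'.symm, hbc h', hbd h']
  have ne14 : ({a, b, c} : Finset Ω') ≠ {b, c, d} := by
    intro h
    have hc : a ∈ ({b, c, d} : Finset Ω') := by rw [← h]; simp
    simp only [Finset.mem_insert, Finset.mem_singleton] at hc
    rcases hc with h' | h' | h'; exacts [hab h', hac h', had h']
  have ne23 : ({a, b, d} : Finset Ω') ≠ {a, c, d} := by
    intro h
    have hc : b ∈ ({a, c, d} : Finset Ω') := by rw [← h]; simp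
    simp only [Finset.mem_insert, Finset.mem_singleton] at hc
    rcases hc with h' | h' | h'; exacts [hab h'.symm, hbc h', hbd h']
  have ne24 : ({a, b, d} : Finset Ω') ≠ {b, c, d} := by
    intro h
    have hc : a ∈ ({b, c, d} : Finset Ω') := by rw [← h]; simp
    simp only [Finset.mem_insert, Finset.mem_singleton] at hc
    rcases hc with h' | h' | h'; exacts [hab h', hac h', had h']
  have ne34 : ({a, c, d} : Finset Ω') ≠ {b, c, d} := by
    intro h
    have hc : a ∈ ({b, c, d} : Finset Ω') := by rw [← h]; simp
    simp only [Finset.mem_insert, Finset.mem_singleton] at hc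
    rcases hc with h' | h' | h'; exacts [hab h', hac h', had h']
  rw [Finset.card_filter] at hcount
  rw [Finset.sum_insert (by simp [ne12, ne13, ne14]),
      Finset.sum_insert (by simp [ne23, ne24]),
      Finset.sum_insert (by simp [ne34]), Finset.sum_singleton] at hcount
  by_cases p1 : ({a, b, c} : Finset Ω') ∈ collinearTriples B <;>
    by_cases p2 : ({a, b, d} : Finset Ω') ∈ collinearTriples B <;>
      by_cases p3 : ({a, c, d} : Finset Ω') ∈ collinearTriples B <;>
        by_cases p4 : ({b, c, d} : Finset Ω') ∈ collinearTriples B <;>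
          simp [p1, p2, p3, p4] at hcount ⊢

private lemma mv_invol' (h4c : ∀ L ∈ B, L.card = 4) {mv : Ω' → Ω' → Equiv.Perm Ω'}
    (hmv : IsElemMoveFn B mv) (a b : Ω') : mv a b * mv a b = 1 := by
  rcases eq_or_ne a b with rfl | hab
  · rw [hmv.1 a, one_mul]
  · apply Equiv.ext
    intro p
    simp only [Equiv.Perm.mul_apply, Equiv.Perm.one_apply]
    by_cases hpa : p = a
    · rw [hpa, (hmv.2 a b hab).1, (hmv.2 a b hab).2.1]
    · by_cases hpb : p = b
      · rw [hpb, (hmv.2 a b hab).2.1, (hmv.2 a b hab).1]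
      · by_cases hj : p ∈ lineJoin B a b
        · obtain ⟨q, hq, hqa, hqb, hqp⟩ := join_quad h4c hab hpa hpb hj
          have hq' : ({a, b, q, p} : Finset Ω') ∈ B := by
            have e : ({a, b, q, p} : Finset Ω') = {a, b, p, q} := by
              ext u; simp only [Finset.mem_insert, Finset.mem_singleton]; tauto
            rw [e]; exact hq
          rw [(hmv.2 a b hab).2.2.1 p q hq, (hmv.2 a b hab).2.2.1 q p hq']
        · have hfix := (hmv.2 a b hab).2.2.2 p hpa hpb
            (fun L hL hc => hj ⟨L, hL, hc.1, hc.2.1, hc.2.2⟩)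
          rw [hfix, hfix]

set_option maxHeartbeats 8000000 in
private lemma partB' (h4c : ∀ L ∈ B, L.card = 4) (hss : Supersimple B)
    (hsd : SymmDiffCond B) (hRT : IsRegularTwoGraph (collinearTriples B))
    {mv : Ω' → Ω' → Equiv.Perm Ω'} (hmv : IsElemMoveFn B mv)
    {x y z : Ω'} (hxy : x ≠ y) (hyz : y ≠ z) (hxz : x ≠ z)
    (hx : x ∉ lineJoin B y z) :
    mv y z * mv x y * mv z x = mv x y := by
  have hyx := hxy.symm
  have hzy := hyz.symm
  have hzx := hxz.symm
  have mvab : ∀ a b : Ω', a ≠ b → mv a b a = b := fun a b h => (hmv.2 a b h).1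
  have mvba : ∀ a b : Ω', a ≠ b → mv a b b = a := fun a b h => (hmv.2 a b h).2.1
  have mvline : ∀ a b c d : Ω', ({a, b, c, d} : Finset Ω') ∈ B → mv a b c = d :=
    fun a b c d h => (hmv.2 a b (quad_ne' h4c h).1).2.2.1 c d h
  have mvfix : ∀ a b p : Ω', a ≠ b → p ≠ a → p ≠ b → p ∉ lineJoin B a b → mv a b p = p :=
    fun a b p h h1 h2 h3 =>
      (hmv.2 a b h).2.2.2 p h1 h2 (fun L hL hc => h3 ⟨L, hL, hc.1, hc.2.1, hc.2.2⟩)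
  have hline : ∀ L ∈ B, x ∈ L → y ∈ L → z ∈ L → False :=
    fun L hL h1 h2 h3 => hx ⟨L, hL, h2, h3, h1⟩
  have hzxy : z ∉ lineJoin B x y := by rintro ⟨L, hL, a1, a2, a3⟩; exact hline L hL a1 a2 a3
  have hyzx : y ∉ lineJoin B z x := by rintro ⟨L, hL, a1, a2, a3⟩; exact hline L hL a2 a3 a1
  apply Equiv.ext
  intro p
  simp only [Equiv.Perm.mul_apply]
  by_cases hpx : p = x
  · rw [hpx, mvba z x hzx, mvfix x y z hxy hzx hzy hzxy, mvba y z hyz, mvab x y hxy]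
  by_cases hpy : p = y
  · rw [hpy, mvfix z x y hzx hyz hyx hyzx, mvba x y hxy, mvfix y z x hyz hxy hxz hx]
  by_cases hpz : p = z
  · rw [hpz, mvab z x hzx, mvab x y hxy, mvab y z hyz, mvfix x y z hxy hzx hzy hzxy]
  -- now p ∉ {x, y, z}
  have hxp := Ne.symm hpx
  have hyp := Ne.symm hpy
  have hzp := Ne.symm hpz
  have c1 : (({x, y, p} : Finset Ω') ∈ collinearTriples B) ↔ p ∈ lineJoin B x y := by
    rw [triple_iff hxy hxp hyp]; exact Iff.rfl
  have c2 : (({y, z, p} : Finset Ω') ∈ collinearTriples B) ↔ p ∈ lineJoin B y z := by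
    rw [triple_iff hyz hyp hzp]; exact Iff.rfl
  have c3 : (({x, z, p} : Finset Ω') ∈ collinearTriples B) ↔ p ∈ lineJoin B z x := by
    rw [triple_iff hxz hxp hzp]
    constructor
    · rintro ⟨L, hL, a1, a2, a3⟩; exact ⟨L, hL, a2, a1, a3⟩
    · rintro ⟨L, hL, a1, a2, a3⟩; exact ⟨L, hL, a2, a1, a3⟩
  have hT0 : ({x, y, z} : Finset Ω') ∉ collinearTriples B := by
    rw [triple_iff hxy hxz hyz]; rintro ⟨L, hL, a1, a2, a3⟩; exact hline L hL a1 a2 a3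
  have hpar := parity4 hRT hxy hxz hxp hyz hyp hzp
  rw [c1, c3, c2] at hpar
  by_cases h1 : p ∈ lineJoin B x y <;> by_cases h2 : p ∈ lineJoin B y z <;>
    by_cases h3 : p ∈ lineJoin B z x
  -- (T,T,T)
  · exact absurd (hpar.mpr (by tauto)) hT0
  -- (T,T,F) : case (ii-b)
  · obtain ⟨q, hM, hqx, hqy, hqp⟩ := join_quad h4c hxy hpx hpy h1
    obtain ⟨t, hK, hty, htz, htp⟩ := join_quad h4c hyz hpy hpz h2
    have hqz : q ≠ z := by rintro rfl; exact hline _ hM (by simp) (by simp) (by simp)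
    rw [mvfix z x p hzx hpz hpx h3, mvline x y p q hM]
    apply mvfix y z q hyz hqy hqz
    rintro hQ
    obtain ⟨u, hQl, huy, huz, huq⟩ := join_quad h4c hyz hqy hqz hQ
    have hux : u ≠ x := by rintro rfl; exact hline _ hQl (by simp) (by simp) (by simp)
    have hup : u ≠ p := by
      intro hue
      rw [hue] at hQl
      have hQK : ({y, z, q, p} : Finset Ω') = {y, z, p, t} :=
        line_eq' hss hQl hK hyz hyp hzp (by simp) (by simp) (by simp)
          (by simp) (by simp) (by simp)
      have hqK : q ∈ ({y, z, p, t} : Finset Ω') := by rw [← hQK]; simp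
      simp only [Finset.mem_insert, Finset.mem_singleton] at hqK
      rcases hqK with h' | h' | h' | h'
      · exact hqy h'
      · exact hqz h'
      · exact hqp h'
      · have hMK : ({x, y, p, q} : Finset Ω') = {y, z, p, t} := by
          refine line_eq' hss hM hK hyp (Ne.symm hqy) (Ne.symm hqp)
            (by simp) (by simp) (by simp) (by simp) (by simp) ?_
          rw [← h']; simp
        have hxK : x ∈ ({y, z, p, t} : Finset Ω') := by rw [← hMK]; simp
        simp only [Finset.mem_insert, Finset.mem_singleton] at hxK
        rcases hxK with h'' | h'' | h'' | h''
        · exact hxy h''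
        · exact hxz h''
        · exact hpx h''.symm
        · rw [← h'] at h''; exact hqx h''.symm
    have hM' : ({y, q, x, p} : Finset Ω') ∈ B := by
      have e : ({y, q, x, p} : Finset Ω') = {x, y, p, q} := by
        ext w; simp only [Finset.mem_insert, Finset.mem_singleton]; tauto
      rw [e]; exact hM
    have hQ' : ({y, q, z, u} : Finset Ω') ∈ B := by
      have e : ({y, q, z, u} : Finset Ω') = {y, z, q, u} := by
        ext w; simp only [Finset.mem_insert, Finset.mem_singleton]; tauto
      rw [e]; exact hQl
    have hnew := symmdiff_line' h4c hsd hM' hQ' hxz hux.symm hpz hup.symm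
    exact h3 ⟨_, hnew, by simp, by simp, by simp⟩
  -- (T,F,T) : case (ii-a)
  · obtain ⟨q, hM, hqx, hqy, hqp⟩ := join_quad h4c hxy hpx hpy h1
    obtain ⟨r, hN, hrz, hrx, hrp⟩ := join_quad h4c hzx hpz hpx h3
    have hqz : q ≠ z := by rintro rfl; exact hline _ hM (by simp) (by simp) (by simp)
    have hry : r ≠ y := by rintro rfl; exact hline _ hN (by simp) (by simp) (by simp)
    have hqr : q ≠ r := by
      rintro rfl
      have hMN : ({x, y, p, q} : Finset Ω') = {z, x, p, q} :=
        line_eq' hss hM hN hxp hqx.symm hqp.symm (by simp) (by simp) (by simp)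
          (by simp) (by simp) (by simp)
      have hyN : y ∈ ({z, x, p, q} : Finset Ω') := by rw [← hMN]; simp
      simp only [Finset.mem_insert, Finset.mem_singleton] at hyN
      rcases hyN with h' | h' | h' | h'
      · exact hyz h'
      · exact hxy h'.symm
      · exact hpy h'.symm
      · exact hqy h'.symm
    have hM' : ({x, p, y, q} : Finset Ω') ∈ B := by
      have e : ({x, p, y, q} : Finset Ω') = {x, y, p, q} := by
        ext w; simp only [Finset.mem_insert, Finset.mem_singleton]; tauto
      rw [e]; exact hM
    have hN' : ({x, p, z, r} : Finset Ω') ∈ B := by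
      have e : ({x, p, z, r} : Finset Ω') = {z, x, p, r} := by
        ext w; simp only [Finset.mem_insert, Finset.mem_singleton]; tauto
      rw [e]; exact hN
    have hYQZR := symmdiff_line' h4c hsd hM' hN' hyz hry.symm hqz hqr
    have hYZRQ : ({y, z, r, q} : Finset Ω') ∈ B := by
      have e : ({y, z, r, q} : Finset Ω') = {y, q, z, r} := by
        ext w; simp only [Finset.mem_insert, Finset.mem_singleton]; tauto
      rw [e]; exact hYQZR
    rw [mvline z x p r hN, mvline x y p q hM]
    have hrfix : mv x y r = r := by
      apply mvfix x y r hxy hrx hry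
      rintro hP
      obtain ⟨s, hPl, hsx, hsy, hsr⟩ := join_quad h4c hxy hrx hry hP
      have hsz : s ≠ z := by rintro rfl; exact hline _ hPl (by simp) (by simp) (by simp)
      have hsp : s ≠ p := by
        intro hse
        rw [hse] at hPl
        have hPM : ({x, y, r, p} : Finset Ω') = {x, y, p, q} :=
          line_eq' hss hPl hM hxy hxp hyp (by simp) (by simp) (by simp)
            (by simp) (by simp) (by simp)
        have hrM : r ∈ ({x, y, p, q} : Finset Ω') := by rw [← hPM]; simp
        simp only [Finset.mem_insert, Finset.mem_singleton] at hrM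
        rcases hrM with h' | h' | h' | h'
        · exact hrx h'
        · exact hry h'
        · exact hrp h'
        · exact hqr h'.symm
      have hN'' : ({x, r, z, p} : Finset Ω') ∈ B := by
        have e : ({x, r, z, p} : Finset Ω') = {z, x, p, r} := by
          ext w; simp only [Finset.mem_insert, Finset.mem_singleton]; tauto
        rw [e]; exact hN
      have hP'' : ({x, r, y, s} : Finset Ω') ∈ B := by
        have e : ({x, r, y, s} : Finset Ω') = {x, y, r, s} := by
          ext w; simp only [Finset.mem_insert, Finset.mem_singleton]; tauto
        rw [e]; exact hPl
      have hnew := symmdiff_line' h4c hsd hN'' hP'' hzy hsz.symm hpy hsp.symm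
      exact h2 ⟨_, hnew, by simp, by simp, by simp⟩
    rw [hrfix]
    exact mvline y z r q hYZRQ
  -- (T,F,F)
  · exact absurd (hpar.mpr (by tauto)) hT0
  -- (F,T,T) : case (ii-c)
  · obtain ⟨t, hK, hty, htz, htp⟩ := join_quad h4c hyz hpy hpz h2
    obtain ⟨r, hN, hrz, hrx, hrp⟩ := join_quad h4c hzx hpz hpx h3
    have hry : r ≠ y := by rintro rfl; exact hline _ hN (by simp) (by simp) (by simp)
    have htx : t ≠ x := by rintro rfl; exact hline _ hK (by simp) (by simp) (by simp)
    have htr : t ≠ r := by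
      rintro rfl
      have hKN : ({y, z, p, t} : Finset Ω') = {z, x, p, t} :=
        line_eq' hss hK hN hzp htz.symm htp.symm (by simp) (by simp) (by simp)
          (by simp) (by simp) (by simp)
      have hyN : y ∈ ({z, x, p, t} : Finset Ω') := by rw [← hKN]; simp
      simp only [Finset.mem_insert, Finset.mem_singleton] at hyN
      rcases hyN with h' | h' | h' | h'
      · exact hyz h'
      · exact hxy h'.symm
      · exact hpy h'.symm
      · exact hty h'.symm
    have hK' : ({z, p, y, t} : Finset Ω') ∈ B := by
      have e : ({z, p, y, t} : Finset Ω') = {y, z, p, t} := by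
        ext w; simp only [Finset.mem_insert, Finset.mem_singleton]; tauto
      rw [e]; exact hK
    have hN' : ({z, p, x, r} : Finset Ω') ∈ B := by
      have e : ({z, p, x, r} : Finset Ω') = {z, x, p, r} := by
        ext w; simp only [Finset.mem_insert, Finset.mem_singleton]; tauto
      rw [e]; exact hN
    have hYTXR := symmdiff_line' h4c hsd hK' hN' hyx hry.symm htx htr
    have hXYRT : ({x, y, r, t} : Finset Ω') ∈ B := by
      have e : ({x, y, r, t} : Finset Ω') = {y, t, x, r} := by
        ext w; simp only [Finset.mem_insert, Finset.mem_singleton]; tauto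
      rw [e]; exact hYTXR
    have hKre : ({y, z, t, p} : Finset Ω') ∈ B := by
      have e : ({y, z, t, p} : Finset Ω') = {y, z, p, t} := by
        ext w; simp only [Finset.mem_insert, Finset.mem_singleton]; tauto
      rw [e]; exact hK
    rw [mvline z x p r hN, mvline x y r t hXYRT, mvline y z t p hKre,
      mvfix x y p hxy hpx hpy h1]
  -- (F,T,F)
  · exact absurd (hpar.mpr (by tauto)) hT0
  -- (F,F,T)
  · exact absurd (hpar.mpr (by tauto)) hT0
  -- (F,F,F)
  · rw [mvfix z x p hzx hpz hpx h3, mvfix x y p hxy hpx hpy h1, mvfix y z p hyz hpy hpz h2]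

set_option maxHeartbeats 40000000 in
private lemma partA' (h4c : ∀ L ∈ B, L.card = 4) (hss : Supersimple B)
    (hsd : SymmDiffCond B) (hRT : IsRegularTwoGraph (collinearTriples B))
    {mv : Ω' → Ω' → Equiv.Perm Ω'} (hmv : IsElemMoveFn B mv)
    {x y z : Ω'} (hxy : x ≠ y) (hyz : y ≠ z) (hxz : x ≠ z)
    (hx : x ∈ lineJoin B y z) :
    (mv x y * mv y z) * (mv x y * mv y z) = 1 := by
  have hyx := hxy.symm
  have hzy := hyz.symm
  have hzx := hxz.symm
  obtain ⟨L0, hL0, hyL, hzL, hxL⟩ := hx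
  obtain ⟨w, hLq, hwx, hwy, hwz⟩ := fourth' h4c hL0 hxy hxz hyz hxL hyL hzL
  obtain ⟨-, -, hxw, -, hyw, hzw⟩ := quad_ne' h4c hLq
  have mvab : ∀ a b : Ω', a ≠ b → mv a b a = b := fun a b h => (hmv.2 a b h).1
  have mvba : ∀ a b : Ω', a ≠ b → mv a b b = a := fun a b h => (hmv.2 a b h).2.1
  have mvline : ∀ a b c d : Ω', ({a, b, c, d} : Finset Ω') ∈ B → mv a b c = d :=
    fun a b c d h => (hmv.2 a b (quad_ne' h4c h).1).2.2.1 c d h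
  have mvfix : ∀ a b p : Ω', a ≠ b → p ≠ a → p ≠ b → p ∉ lineJoin B a b → mv a b p = p :=
    fun a b p h h1 h2 h3 =>
      (hmv.2 a b h).2.2.2 p h1 h2 (fun L hL hc => h3 ⟨L, hL, hc.1, hc.2.1, hc.2.2⟩)
  have hLyzxw : ({y, z, x, w} : Finset Ω') ∈ B := by
    have e : ({y, z, x, w} : Finset Ω') = {x, y, z, w} := by
      ext ww; simp only [Finset.mem_insert, Finset.mem_singleton]; tauto
    rw [e]; exact hLq
  have hLxywz : ({x, y, w, z} : Finset Ω') ∈ B := by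
    have e : ({x, y, w, z} : Finset Ω') = {x, y, z, w} := by
      ext ww; simp only [Finset.mem_insert, Finset.mem_singleton]; tauto
    rw [e]; exact hLq
  have hLyzwx : ({y, z, w, x} : Finset Ω') ∈ B := by
    have e : ({y, z, w, x} : Finset Ω') = {x, y, z, w} := by
      ext ww; simp only [Finset.mem_insert, Finset.mem_singleton]; tauto
    rw [e]; exact hLq
  have hLywxz : ({y, w, x, z} : Finset Ω') ∈ B := by
    have e : ({y, w, x, z} : Finset Ω') = {x, y, z, w} := by
      ext ww; simp only [Finset.mem_insert, Finset.mem_singleton]; tauto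
    rw [e]; exact hLq
  apply Equiv.ext
  intro p
  simp only [Equiv.Perm.mul_apply, Equiv.Perm.one_apply]
  by_cases hpx : p = x
  · rw [hpx, mvline y z x w hLyzxw, mvline x y w z hLxywz, mvba y z hyz, mvba x y hxy]
  by_cases hpy : p = y
  · rw [hpy, mvab y z hyz, mvline x y z w hLq, mvline y z w x hLyzwx, mvab x y hxy]
  by_cases hpz : p = z
  · rw [hpz, mvba y z hyz, mvba x y hxy, mvline y z x w hLyzxw, mvline x y w z hLxywz]
  by_cases hpw : p = w
  · rw [hpw, mvline y z w x hLyzwx, mvab x y hxy, mvab y z hyz, mvline x y z w hLq]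
  have hxp := Ne.symm hpx
  have hyp := Ne.symm hpy
  have hzp := Ne.symm hpz
  have hwp := Ne.symm hpw
  have c1 : (({x, y, p} : Finset Ω') ∈ collinearTriples B) ↔ p ∈ lineJoin B x y := by
    rw [triple_iff hxy hxp hyp]; exact Iff.rfl
  have c2 : (({y, z, p} : Finset Ω') ∈ collinearTriples B) ↔ p ∈ lineJoin B y z := by
    rw [triple_iff hyz hyp hzp]; exact Iff.rfl
  have c3 : (({x, z, p} : Finset Ω') ∈ collinearTriples B) ↔ p ∈ lineJoin B z x := by
    rw [triple_iff hxz hxp hzp]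
    constructor
    · rintro ⟨L, hL, a1, a2, a3⟩; exact ⟨L, hL, a2, a1, a3⟩
    · rintro ⟨L, hL, a1, a2, a3⟩; exact ⟨L, hL, a2, a1, a3⟩
  have hT0 : ({x, y, z} : Finset Ω') ∈ collinearTriples B := by
    rw [triple_iff hxy hxz hyz]; exact ⟨_, hLq, by simp, by simp, by simp⟩
  have hpar := parity4 hRT hxy hxz hxp hyz hyp hzp
  rw [c1, c3, c2] at hpar
  have hpar' := hpar.mp hT0
  by_cases h1 : p ∈ lineJoin B x y <;> by_cases h2 : p ∈ lineJoin B y z <;>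
    by_cases h3 : p ∈ lineJoin B z x
  -- (T,T,T) : case IV
  · obtain ⟨q, hM, hqx, hqy, hqp⟩ := join_quad h4c hxy hpx hpy h1
    obtain ⟨t, hK, hty, htz, htp⟩ := join_quad h4c hyz hpy hpz h2
    obtain ⟨r, hN, hrz, hrx, hrp⟩ := join_quad h4c hzx hpz hpx h3
    have hry : r ≠ y := by
      intro he; rw [he] at hN
      have hNL : ({z, x, p, y} : Finset Ω') = {x, y, z, w} :=
        line_eq' hss hN hLq hzx hzy hxy (by simp) (by simp) (by simp)
          (by simp) (by simp) (by simp)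
      have hpL : p ∈ ({x, y, z, w} : Finset Ω') := by rw [← hNL]; simp
      simp only [Finset.mem_insert, Finset.mem_singleton] at hpL
      rcases hpL with h' | h' | h' | h'; exacts [hpx h', hpy h', hpz h', hpw h']
    have hrw : r ≠ w := by
      intro he; rw [he] at hN
      have hNL : ({z, x, p, w} : Finset Ω') = {x, y, z, w} :=
        line_eq' hss hN hLq hzx hzw hxw (by simp) (by simp) (by simp)
          (by simp) (by simp) (by simp)
      have hpL : p ∈ ({x, y, z, w} : Finset Ω') := by rw [← hNL]; simp
      simp only [Finset.mem_insert, Finset.mem_singleton] at hpL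
      rcases hpL with h' | h' | h' | h'; exacts [hpx h', hpy h', hpz h', hpw h']
    have htx : t ≠ x := by
      intro he; rw [he] at hK
      have hKL : ({y, z, p, x} : Finset Ω') = {x, y, z, w} :=
        line_eq' hss hK hLq hyz hyx hzx (by simp) (by simp) (by simp)
          (by simp) (by simp) (by simp)
      have hpL : p ∈ ({x, y, z, w} : Finset Ω') := by rw [← hKL]; simp
      simp only [Finset.mem_insert, Finset.mem_singleton] at hpL
      rcases hpL with h' | h' | h' | h'; exacts [hpx h', hpy h', hpz h', hpw h']
    have htr : t ≠ r := by
      intro he; rw [he] at hK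
      have hKN : ({y, z, p, r} : Finset Ω') = {z, x, p, r} :=
        line_eq' hss hK hN hzp hrz.symm hrp.symm (by simp) (by simp) (by simp)
          (by simp) (by simp) (by simp)
      have hyN : y ∈ ({z, x, p, r} : Finset Ω') := by rw [← hKN]; simp
      simp only [Finset.mem_insert, Finset.mem_singleton] at hyN
      rcases hyN with h' | h' | h' | h'
      · exact hyz h'
      · exact hxy h'.symm
      · exact hpy h'.symm
      · exact hry h'.symm
    have hK' : ({z, p, y, t} : Finset Ω') ∈ B := by
      have e : ({z, p, y, t} : Finset Ω') = {y, z, p, t} := by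
        ext ww; simp only [Finset.mem_insert, Finset.mem_singleton]; tauto
      rw [e]; exact hK
    have hN' : ({z, p, x, r} : Finset Ω') ∈ B := by
      have e : ({z, p, x, r} : Finset Ω') = {z, x, p, r} := by
        ext ww; simp only [Finset.mem_insert, Finset.mem_singleton]; tauto
      rw [e]; exact hN
    have hYTXR := symmdiff_line' h4c hsd hK' hN' hyx hry.symm htx htr
    have hXYTR : ({x, y, t, r} : Finset Ω') ∈ B := by
      have e : ({x, y, t, r} : Finset Ω') = {y, t, x, r} := by
        ext ww; simp only [Finset.mem_insert, Finset.mem_singleton]; tauto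
      rw [e]; exact hYTXR
    have hxr := hrx.symm
    have hyr := hry.symm
    have hzr := hrz.symm
    have d1 : ({x, y, r} : Finset Ω') ∈ collinearTriples B := by
      rw [triple_iff hxy hxr hyr]; exact ⟨_, hXYTR, by simp, by simp, by simp⟩
    have d2 : ({x, z, r} : Finset Ω') ∈ collinearTriples B := by
      rw [triple_iff hxz hxr hzr]; exact ⟨_, hN, by simp, by simp, by simp⟩
    have hpar2 := parity4 hRT hxy hxz hxr hyz hyr hzr
    have d3 : ({y, z, r} : Finset Ω') ∈ collinearTriples B := by tauto
    have hjr : r ∈ lineJoin B y z := by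
      rw [triple_iff hyz hyr hzr] at d3
      obtain ⟨L', hL', a1, a2, a3⟩ := d3
      exact ⟨L', hL', a1, a2, a3⟩
    obtain ⟨u, hQl, huy, huz, hur⟩ := join_quad h4c hyz hry hrz hjr
    have hux : u ≠ x := by
      intro he; rw [he] at hQl
      have hQL : ({y, z, r, x} : Finset Ω') = {x, y, z, w} :=
        line_eq' hss hQl hLq hyz hyx hzx (by simp) (by simp) (by simp)
          (by simp) (by simp) (by simp)
      have hrL : r ∈ ({x, y, z, w} : Finset Ω') := by rw [← hQL]; simp
      simp only [Finset.mem_insert, Finset.mem_singleton] at hrL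
      rcases hrL with h' | h' | h' | h'; exacts [hrx h', hry h', hrz h', hrw h']
    have hup : u ≠ p := by
      intro he; rw [he] at hQl
      have hQK : ({y, z, r, p} : Finset Ω') = {y, z, p, t} :=
        line_eq' hss hQl hK hyz hyp hzp (by simp) (by simp) (by simp)
          (by simp) (by simp) (by simp)
      have hrK : r ∈ ({y, z, p, t} : Finset Ω') := by rw [← hQK]; simp
      simp only [Finset.mem_insert, Finset.mem_singleton] at hrK
      rcases hrK with h' | h' | h' | h'
      · exact hry h'
      · exact hrz h'
      · exact hrp h'
      · exact htr h'.symm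
    have hQ' : ({z, r, y, u} : Finset Ω') ∈ B := by
      have e : ({z, r, y, u} : Finset Ω') = {y, z, r, u} := by
        ext ww; simp only [Finset.mem_insert, Finset.mem_singleton]; tauto
      rw [e]; exact hQl
    have hN'' : ({z, r, x, p} : Finset Ω') ∈ B := by
      have e : ({z, r, x, p} : Finset Ω') = {z, x, p, r} := by
        ext ww; simp only [Finset.mem_insert, Finset.mem_singleton]; tauto
      rw [e]; exact hN
    have hS := symmdiff_line' h4c hsd hQ' hN'' hyx hyp hux hup
    have hSM : ({y, u, x, p} : Finset Ω') = {x, y, p, q} :=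
      line_eq' hss hS hM hxy hxp hyp (by simp) (by simp) (by simp)
        (by simp) (by simp) (by simp)
    have huM : u ∈ ({x, y, p, q} : Finset Ω') := by rw [← hSM]; simp
    simp only [Finset.mem_insert, Finset.mem_singleton] at huM
    rcases huM with h' | h' | h' | h'
    · exact absurd h' hux
    · exact absurd h' huy
    · exact absurd h' hup
    · rw [h'] at hQl
      have hMre : ({x, y, q, p} : Finset Ω') ∈ B := by
        have e : ({x, y, q, p} : Finset Ω') = {x, y, p, q} := by
          ext ww; simp only [Finset.mem_insert, Finset.mem_singleton]; tauto
        rw [e]; exact hM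
      rw [mvline y z p t hK, mvline x y t r hXYTR, mvline y z r q hQl,
        mvline x y q p hMre]
  -- (T,T,F) kill
  · exact absurd hpar' (by tauto)
  -- (T,F,T) kill
  · exact absurd hpar' (by tauto)
  -- (T,F,F) : case II
  · obtain ⟨q, hM, hqx, hqy, hqp⟩ := join_quad h4c hxy hpx hpy h1
    have hqz : q ≠ z := by
      intro he; rw [he] at hM
      have hML : ({x, y, p, z} : Finset Ω') = {x, y, z, w} :=
        line_eq' hss hM hLq hxy hxz hyz (by simp) (by simp) (by simp)
          (by simp) (by simp) (by simp)
      have hpL : p ∈ ({x, y, z, w} : Finset Ω') := by rw [← hML]; simp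
      simp only [Finset.mem_insert, Finset.mem_singleton] at hpL
      rcases hpL with h' | h' | h' | h'; exacts [hpx h', hpy h', hpz h', hpw h']
    have hqw : q ≠ w := by
      intro he; rw [he] at hM
      have hML : ({x, y, p, w} : Finset Ω') = {x, y, z, w} :=
        line_eq' hss hM hLq hxy hxw hyw (by simp) (by simp) (by simp)
          (by simp) (by simp) (by simp)
      have hpL : p ∈ ({x, y, z, w} : Finset Ω') := by rw [← hML]; simp
      simp only [Finset.mem_insert, Finset.mem_singleton] at hpL
      rcases hpL with h' | h' | h' | h'; exacts [hpx h', hpy h', hpz h', hpw h']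
    have hMre : ({x, y, q, p} : Finset Ω') ∈ B := by
      have e : ({x, y, q, p} : Finset Ω') = {x, y, p, q} := by
        ext ww; simp only [Finset.mem_insert, Finset.mem_singleton]; tauto
      rw [e]; exact hM
    rw [mvfix y z p hyz hpy hpz h2, mvline x y p q hM]
    have hqfix : mv y z q = q := by
      apply mvfix y z q hyz hqy hqz
      rintro hQ
      obtain ⟨u, hQl, huy, huz, huq⟩ := join_quad h4c hyz hqy hqz hQ
      have hup : u ≠ p := by
        intro he; rw [he] at hQl
        exact h2 ⟨_, hQl, by simp, by simp, by simp⟩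
      have huw : u ≠ w := by
        intro he; rw [he] at hQl
        have hQL : ({y, z, q, w} : Finset Ω') = {x, y, z, w} :=
          line_eq' hss hQl hLq hyz hyw hzw (by simp) (by simp) (by simp)
            (by simp) (by simp) (by simp)
        have hqL : q ∈ ({x, y, z, w} : Finset Ω') := by rw [← hQL]; simp
        simp only [Finset.mem_insert, Finset.mem_singleton] at hqL
        rcases hqL with h' | h' | h' | h'; exacts [hqx h', hqy h', hqz h', hqw h']
      have hux : u ≠ x := by
        intro he; rw [he] at hQl
        have hQL : ({y, z, q, x} : Finset Ω') = {x, y, z, w} :=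
          line_eq' hss hQl hLq hyz hyx hzx (by simp) (by simp) (by simp)
            (by simp) (by simp) (by simp)
        have hqL : q ∈ ({x, y, z, w} : Finset Ω') := by rw [← hQL]; simp
        simp only [Finset.mem_insert, Finset.mem_singleton] at hqL
        rcases hqL with h' | h' | h' | h'; exacts [hqx h', hqy h', hqz h', hqw h']
      have hP := symmdiff_line' h4c hsd hM hLq hpz hpw hqz hqw
      have hQ' : ({z, q, y, u} : Finset Ω') ∈ B := by
        have e : ({z, q, y, u} : Finset Ω') = {y, z, q, u} := by
          ext ww; simp only [Finset.mem_insert, Finset.mem_singleton]; tauto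
        rw [e]; exact hQl
      have hP' : ({z, q, p, w} : Finset Ω') ∈ B := by
        have e : ({z, q, p, w} : Finset Ω') = {p, q, z, w} := by
          ext ww; simp only [Finset.mem_insert, Finset.mem_singleton]; tauto
        rw [e]; exact hP
      have hR := symmdiff_line' h4c hsd hQ' hP' hyp hyw hup huw
      have hR' : ({y, w, u, p} : Finset Ω') ∈ B := by
        have e : ({y, w, u, p} : Finset Ω') = {y, u, p, w} := by
          ext ww; simp only [Finset.mem_insert, Finset.mem_singleton]; tauto
        rw [e]; exact hR
      have hfin := symmdiff_line' h4c hsd hR' hLywxz hux huz hpx hpz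
      exact h3 ⟨_, hfin, by simp, by simp, by simp⟩
    rw [hqfix, mvline x y q p hMre]
  -- (F,T,T) kill
  · exact absurd hpar' (by tauto)
  -- (F,T,F) : case I
  · obtain ⟨t, hK, hty, htz, htp⟩ := join_quad h4c hyz hpy hpz h2
    have htx : t ≠ x := by
      intro he; rw [he] at hK
      have hKL : ({y, z, p, x} : Finset Ω') = {x, y, z, w} :=
        line_eq' hss hK hLq hyz hyx hzx (by simp) (by simp) (by simp)
          (by simp) (by simp) (by simp)
      have hpL : p ∈ ({x, y, z, w} : Finset Ω') := by rw [← hKL]; simp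
      simp only [Finset.mem_insert, Finset.mem_singleton] at hpL
      rcases hpL with h' | h' | h' | h'; exacts [hpx h', hpy h', hpz h', hpw h']
    have htw : t ≠ w := by
      intro he; rw [he] at hK
      have hKL : ({y, z, p, w} : Finset Ω') = {x, y, z, w} :=
        line_eq' hss hK hLq hyz hyw hzw (by simp) (by simp) (by simp)
          (by simp) (by simp) (by simp)
      have hpL : p ∈ ({x, y, z, w} : Finset Ω') := by rw [← hKL]; simp
      simp only [Finset.mem_insert, Finset.mem_singleton] at hpL
      rcases hpL with h' | h' | h' | h'; exacts [hpx h', hpy h', hpz h', hpw h']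
    have hKre : ({y, z, t, p} : Finset Ω') ∈ B := by
      have e : ({y, z, t, p} : Finset Ω') = {y, z, p, t} := by
        ext ww; simp only [Finset.mem_insert, Finset.mem_singleton]; tauto
      rw [e]; exact hK
    rw [mvline y z p t hK]
    have htfix : mv x y t = t := by
      apply mvfix x y t hxy htx hty
      rintro hQ
      obtain ⟨s, hQl, hsx, hsy, hst⟩ := join_quad h4c hxy htx hty hQ
      have hsp : s ≠ p := by
        intro he; rw [he] at hQl
        exact h1 ⟨_, hQl, by simp, by simp, by simp⟩
      have hsw : s ≠ w := by
        intro he; rw [he] at hQl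
        have hQL : ({x, y, t, w} : Finset Ω') = {x, y, z, w} :=
          line_eq' hss hQl hLq hxy hxw hyw (by simp) (by simp) (by simp)
            (by simp) (by simp) (by simp)
        have htL : t ∈ ({x, y, z, w} : Finset Ω') := by rw [← hQL]; simp
        simp only [Finset.mem_insert, Finset.mem_singleton] at htL
        rcases htL with h' | h' | h' | h'; exacts [htx h', hty h', htz h', htw h']
      have hsz : s ≠ z := by
        intro he; rw [he] at hQl
        have hQL : ({x, y, t, z} : Finset Ω') = {x, y, z, w} :=
          line_eq' hss hQl hLq hxy hxz hyz (by simp) (by simp) (by simp)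
            (by simp) (by simp) (by simp)
        have htL : t ∈ ({x, y, z, w} : Finset Ω') := by rw [← hQL]; simp
        simp only [Finset.mem_insert, Finset.mem_singleton] at htL
        rcases htL with h' | h' | h' | h'; exacts [htx h', hty h', htz h', htw h']
      have hP := symmdiff_line' h4c hsd hK hLyzxw hpx hpw htx htw
      have hQ' : ({x, t, y, s} : Finset Ω') ∈ B := by
        have e : ({x, t, y, s} : Finset Ω') = {x, y, t, s} := by
          ext ww; simp only [Finset.mem_insert, Finset.mem_singleton]; tauto
        rw [e]; exact hQl
      have hP' : ({x, t, p, w} : Finset Ω') ∈ B := by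
        have e : ({x, t, p, w} : Finset Ω') = {p, t, x, w} := by
          ext ww; simp only [Finset.mem_insert, Finset.mem_singleton]; tauto
        rw [e]; exact hP
      have hR := symmdiff_line' h4c hsd hQ' hP' hyp hyw hsp hsw
      have hR' : ({y, w, s, p} : Finset Ω') ∈ B := by
        have e : ({y, w, s, p} : Finset Ω') = {y, s, p, w} := by
          ext ww; simp only [Finset.mem_insert, Finset.mem_singleton]; tauto
        rw [e]; exact hR
      have hfin := symmdiff_line' h4c hsd hR' hLywxz hsx hsz hpx hpz
      exact h3 ⟨_, hfin, by simp, by simp, by simp⟩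
    rw [htfix, mvline y z t p hKre, mvfix x y p hxy hpx hpy h1]
  -- (F,F,T) : case III
  · rw [mvfix y z p hyz hpy hpz h2, mvfix x y p hxy hpx hpy h1,
      mvfix y z p hyz hpy hpz h2, mvfix x y p hxy hpx hpy h1]
  -- (F,F,F) kill
  · exact absurd hpar' (by tauto)

end Statement12Helpers

/-- Lemma 4.5 (a),(b): under Hypotheses 4.1, for pairwise distinct
`x,y,z`: the order of `[x,y][y,z]` is 2 if `x ∈ \overline{y,z}` and 3 otherwise; and
if `x ∉ \overline{y,z}` then `[z,x][x,y][y,z] = [x,y]` (factors applied left to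
right). -/
theorem elemMove_product_order [Fintype Ω] [DecidableEq Ω]
    {B : Set (Finset Ω)} {n lam : ℕ}
    (hD : IsDesign B n lam) (hss : Supersimple B) (hsd : SymmDiffCond B)
    (hRT : IsRegularTwoGraph (collinearTriples B))
    (mv : Ω → Ω → Equiv.Perm Ω) (hmv : IsElemMoveFn B mv)
    (x y z : Ω) (hxy : x ≠ y) (hyz : y ≠ z) (hxz : x ≠ z) :
    (x ∈ lineJoin B y z → orderOf (mv x y * mv y z) = 2) ∧
    (x ∉ lineJoin B y z → orderOf (mv x y * mv y z) = 3) ∧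
    (x ∉ lineJoin B y z → mv y z * mv x y * mv z x = mv x y) := by
  have h4c : ∀ L ∈ B, L.card = 4 := hD.2.1
  have hgne : mv x y * mv y z ≠ 1 := by
    intro h
    have h1 : (mv x y * mv y z) z = z := by rw [h]; rfl
    rw [Equiv.Perm.mul_apply, (hmv.2 y z hyz).2.1, (hmv.2 x y hxy).2.1] at h1
    exact hxz h1
  refine ⟨?_, ?_, ?_⟩
  · intro hx
    haveI : Fact (Nat.Prime 2) := ⟨Nat.prime_two⟩
    have h2 : (mv x y * mv y z) ^ 2 = 1 := by
      rw [pow_two]; exact partA' h4c hss hsd hRT hmv hxy hyz hxz hx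
    exact orderOf_eq_prime h2 hgne
  · intro hx
    haveI : Fact (Nat.Prime 3) := ⟨Nat.prime_three⟩
    have hyzx : y ∉ lineJoin B z x := by
      rintro ⟨L, hL, a1, a2, a3⟩; exact hx ⟨L, hL, a3, a1, a2⟩
    have R1 := partB' h4c hss hsd hRT hmv hxy hyz hxz hx
    have R2 := partB' h4c hss hsd hRT hmv hyz hxz.symm hxy.symm hyzx
    have hA2 := mv_invol' h4c hmv x y
    have hB2 := mv_invol' h4c hmv y z
    have hC2 := mv_invol' h4c hmv z x
    have e1 : mv y z * mv x y = mv x y * mv z x := by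
      have h := congrArg (· * mv z x) R1
      simpa [mul_assoc, hC2] using h
    have e2 : mv z x * mv y z = mv y z * mv x y := by
      have h := congrArg (· * mv x y) R2
      simpa [mul_assoc, hA2] using h
    have h3 : (mv x y * mv y z) ^ 3 = 1 := by
      have c1 : (mv x y * mv y z) * (mv x y * mv y z) = mv z x * mv y z := by
        have hg : (mv x y * mv y z) * (mv x y * mv y z)
            = mv x y * (mv y z * mv x y) * mv y z := by group
        rw [hg, e1, ← mul_assoc, hA2, one_mul]
      rw [pow_succ, pow_two, c1, e2, mul_assoc,
        ← mul_assoc (mv x y) (mv x y) (mv y z), hA2, one_mul, hB2]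
    exact orderOf_eq_prime h3 hgne
  · intro hx
    exact partB' h4c hss hsd hRT hmv hxy hyz hxz hx
end

section
/- Assume Hypotheses 4.1 and additionally n > 2λ+2, and let E := {[a,b] : a,b ∈ Ω, a ≠ b}. Then the number of distinct elementary moves is |E| = n(n−1)/(2(λ+1)). -/
open Equiv

variable {Ω : Type*}

section ElemMoveCountingHelpers

variable {Ω' : Type*} [DecidableEq Ω']

private lemma elemMove_quad_distinct (a b c d : Ω') (h : ({a,b,c,d} : Finset Ω').card = 4) :
    a≠b ∧ a≠c ∧ a≠d ∧ b≠c ∧ b≠d ∧ c≠d := by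
  have h3 : ∀ x y z : Ω', (insert x (insert y ({z}:Finset Ω'))).card ≤ 3 := by
    intro x y z
    calc (insert x (insert y ({z}:Finset Ω'))).card ≤ (insert y ({z}:Finset Ω')).card + 1 :=
        Finset.card_insert_le _ _
      _ ≤ ({z}:Finset Ω').card + 1 + 1 := by gcongr; exact Finset.card_insert_le _ _
      _ ≤ 3 := by simp
  refine ⟨?_, ?_, ?_, ?_, ?_, ?_⟩ <;> rintro rfl
  · rw [show ({a,a,c,d}:Finset Ω') = {a,c,d} from by ext t; simp; try tauto] at h
    have := h3 a c d; omega
  · rw [show ({a,b,a,d}:Finset Ω') = {a,b,d} from by ext t; simp; try tauto] at h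
    have := h3 a b d; omega
  · rw [show ({a,b,c,a}:Finset Ω') = {a,b,c} from by ext t; simp; try tauto] at h
    have := h3 a b c; omega
  · rw [show ({a,b,b,d}:Finset Ω') = {a,b,d} from by ext t; simp; try tauto] at h
    have := h3 a b d; omega
  · rw [show ({a,b,c,b}:Finset Ω') = {a,b,c} from by ext t; simp; try tauto] at h
    have := h3 a b c; omega
  · rw [show ({a,b,c,c}:Finset Ω') = {a,b,c} from by ext t; simp; try tauto] at h
    have := h3 a b c; omega

private lemma elemMove_fourth_point (L : Finset Ω') (a b c : Ω') (hL : L.card = 4)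
    (ha : a ∈ L) (hb : b ∈ L) (hc : c ∈ L) (hab : a ≠ b) (hac : a ≠ c) (hbc : b ≠ c) :
    ∃ d, d ∉ ({a,b,c} : Finset Ω') ∧ L = {a,b,c,d} := by
  have hsub : ({a,b,c} : Finset Ω') ⊆ L := by
    intro t ht; simp at ht; rcases ht with rfl|rfl|rfl <;> assumption
  have hcard3 : ({a,b,c} : Finset Ω').card = 3 := by
    rw [Finset.card_insert_of_notMem (by simp [hab, hac]),
      Finset.card_insert_of_notMem (by simp [hbc])]; simp
  have h1 : (L \ {a,b,c}).card = 1 := by rw [Finset.card_sdiff_of_subset hsub, hL, hcard3]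
  obtain ⟨d, hd⟩ := Finset.card_eq_one.mp h1
  have hdm : d ∈ L \ ({a,b,c}:Finset Ω') := by rw [hd]; simp
  refine ⟨d, (Finset.mem_sdiff.mp hdm).2, ?_⟩
  have := Finset.union_sdiff_of_subset hsub
  rw [hd] at this
  rw [← this]; ext t; simp; try tauto

private lemma elemMove_line_decomp (t : Finset Ω') (a b : Ω') (ht : t.card = 4)
    (ha : a ∈ t) (hb : b ∈ t) (hab : a ≠ b) :
    ∃ c d : Ω', c ≠ d ∧ c ∉ ({a,b}:Finset Ω') ∧ d ∉ ({a,b}:Finset Ω') ∧ t = {a,b,c,d} := by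
  have hsub : ({a,b} : Finset Ω') ⊆ t := by
    intro s hs; simp at hs; rcases hs with rfl|rfl <;> assumption
  have h2 : (t \ {a,b}).card = 2 := by
    rw [Finset.card_sdiff_of_subset hsub, ht, Finset.card_pair hab]
  obtain ⟨c, d, hcd, hset⟩ := Finset.card_eq_two.mp h2
  have hcm : c ∈ t \ ({a,b}:Finset Ω') := by rw [hset]; simp
  have hdm : d ∈ t \ ({a,b}:Finset Ω') := by rw [hset]; simp
  refine ⟨c, d, hcd, (Finset.mem_sdiff.mp hcm).2, (Finset.mem_sdiff.mp hdm).2, ?_⟩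
  have := Finset.union_sdiff_of_subset hsub
  rw [hset] at this
  rw [← this]; ext s; simp; try tauto

variable [Fintype Ω'] {B : Set (Finset Ω')} {n lam : ℕ} {mv : Ω' → Ω' → Equiv.Perm Ω'}
variable (hD : IsDesign B n lam) (hss : Supersimple B) (hsd : SymmDiffCond B)
  (hmv : IsElemMoveFn B mv)

set_option maxHeartbeats 1000000 in
include hD hmv in
private lemma elemMove_mv_symm {a b : Ω'} (hab : a ≠ b) : mv b a = mv a b := by
  obtain ⟨hab1, hab2, habL, habF⟩ := hmv.2 a b hab
  obtain ⟨hba1, hba2, hbaL, hbaF⟩ := hmv.2 b a hab.symm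
  ext p
  by_cases hpa : p = a
  · rw [hpa, hab1, hba2]
  by_cases hpb : p = b
  · rw [hpb, hab2, hba1]
  by_cases hline : ∃ L ∈ B, a ∈ L ∧ b ∈ L ∧ p ∈ L
  · obtain ⟨L, hLB, haL, hbL, hpL⟩ := hline
    obtain ⟨q, hq, hLeq⟩ := elemMove_fourth_point L a b p (hD.2.1 L hLB) haL hbL hpL hab
      (Ne.symm hpa) (Ne.symm hpb)
    rw [habL p q (hLeq ▸ hLB), hbaL p q
      (by rw [show ({b,a,p,q}:Finset Ω') = {a,b,p,q} from by ext t; simp; tauto, ← hLeq]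
          exact hLB)]
  · push_neg at hline
    rw [habF p hpa hpb (fun L hL h => hline L hL h.1 h.2.1 h.2.2),
      hbaF p hpb hpa (fun L hL h => hline L hL h.2.1 h.1 h.2.2)]

set_option maxHeartbeats 1000000 in
include hD hss hsd hmv in
private lemma elemMove_mv_eq_of_line {a b x y : Ω'} (hab : a ≠ b)
    (hL : ({a,b,x,y} : Finset Ω') ∈ B) : mv x y = mv a b := by
  have hcard := hD.2.1 _ hL
  obtain ⟨-, hax, hay, hbx, hby, hxy⟩ := elemMove_quad_distinct a b x y hcard
  obtain ⟨hab1, hab2, habL, habF⟩ := hmv.2 a b hab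
  obtain ⟨hxy1, hxy2, hxyL, hxyF⟩ := hmv.2 x y hxy
  set L : Finset Ω' := {a,b,x,y} with hLdef
  have haL : a ∈ L := by simp [hLdef]
  have hbL : b ∈ L := by simp [hLdef]
  have hxL : x ∈ L := by simp [hLdef]
  have hyL : y ∈ L := by simp [hLdef]
  ext p
  by_cases hpa : p = a
  · rw [hpa, hab1, hxyL a b
      (by rw [show ({x,y,a,b}:Finset Ω') = L from by ext t; simp [hLdef]; tauto]; exact hL)]
  by_cases hpb : p = b
  · rw [hpb, hab2, hxyL b a
      (by rw [show ({x,y,b,a}:Finset Ω') = L from by ext t; simp [hLdef]; tauto]; exact hL)]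
  by_cases hpx : p = x
  · rw [hpx, hxy1, habL x y hL]
  by_cases hpy : p = y
  · rw [hpy, hxy2, habL y x
      (by rw [show ({a,b,y,x}:Finset Ω') = L from by ext t; simp [hLdef]; tauto]; exact hL)]
  have hpL : p ∉ L := by simp [hLdef, hpa, hpb, hpx, hpy]
  by_cases hline : ∃ M ∈ B, a ∈ M ∧ b ∈ M ∧ p ∈ M
  · obtain ⟨M, hMB, haM, hbM, hpM⟩ := hline
    obtain ⟨q, hq, hMeq⟩ := elemMove_fourth_point M a b p (hD.2.1 M hMB) haM hbM hpM hab
      (Ne.symm hpa) (Ne.symm hpb)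
    simp only [Finset.mem_insert, Finset.mem_singleton] at hq
    push_neg at hq
    obtain ⟨hqa, hqb, hqp⟩ := hq
    have hML : M ≠ L := fun h => hpL (h ▸ hpM)
    have hcap : L ∩ M = {a,b} := by
      refine (Finset.eq_of_subset_of_card_le ?_ ?_).symm
      · intro t ht; simp at ht
        rcases ht with rfl|rfl <;> simp [Finset.mem_inter, haL, hbL, haM, hbM]
      · have := hss L hL M hMB (Ne.symm hML)
        rwa [Finset.card_pair hab]
    have hxM : x ∉ M := by
      intro h
      have : x ∈ L ∩ M := Finset.mem_inter.mpr ⟨hxL, h⟩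
      rw [hcap] at this; simp at this; tauto
    have hyM : y ∉ M := by
      intro h
      have : y ∈ L ∩ M := Finset.mem_inter.mpr ⟨hyL, h⟩
      rw [hcap] at this; simp at this; tauto
    have hqL : q ∉ L := by
      intro h
      have : q ∈ L ∩ M := Finset.mem_inter.mpr ⟨h, by simp [hMeq]⟩
      rw [hcap] at this; simp at this; tauto
    have hsdm : symmDiff L M ∈ B := by
      apply hsd L hL M hMB
      rw [hcap, Finset.card_pair hab]
    have hsde : symmDiff L M = ({x,y,p,q} : Finset Ω') := by
      have hqM : q ∈ M := by simp [hMeq]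
      ext t
      simp only [Finset.mem_symmDiff, Finset.mem_insert, Finset.mem_singleton]
      constructor
      · rintro (⟨htL, htM⟩ | ⟨htM, htL⟩)
        · simp only [hLdef, Finset.mem_insert, Finset.mem_singleton] at htL
          rcases htL with rfl|rfl|rfl|rfl
          · exact absurd haM htM
          · exact absurd hbM htM
          · tauto
          · tauto
        · rw [hMeq] at htM; simp at htM
          rcases htM with rfl|rfl|rfl|rfl
          · exact absurd haL htL
          · exact absurd hbL htL
          · tauto
          · tauto
      · rintro (rfl|rfl|rfl|rfl)
        · exact Or.inl ⟨hxL, hxM⟩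
        · exact Or.inl ⟨hyL, hyM⟩
        · exact Or.inr ⟨hpM, hpL⟩
        · exact Or.inr ⟨hqM, hqL⟩
    rw [habL p q (hMeq ▸ hMB), hxyL p q (by rw [← hsde]; exact hsdm)]
  · push_neg at hline
    rw [habF p hpa hpb (fun M hM h => hline M hM h.1 h.2.1 h.2.2)]
    apply hxyF p hpx hpy
    rintro N hNB ⟨hxN, hyN, hpN⟩
    have hNL : N ≠ L := fun h => hpL (h ▸ hpN)
    have hcap : L ∩ N = {x,y} := by
      refine (Finset.eq_of_subset_of_card_le ?_ ?_).symm
      · intro t ht; simp at ht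
        rcases ht with rfl|rfl <;> simp [Finset.mem_inter, hxL, hyL, hxN, hyN]
      · have := hss L hL N hNB (Ne.symm hNL)
        rwa [Finset.card_pair hxy]
    have haN : a ∉ N := by
      intro h
      have : a ∈ L ∩ N := Finset.mem_inter.mpr ⟨haL, h⟩
      rw [hcap] at this; simp at this; tauto
    have hbN : b ∉ N := by
      intro h
      have : b ∈ L ∩ N := Finset.mem_inter.mpr ⟨hbL, h⟩
      rw [hcap] at this; simp at this; tauto
    have hsdm : symmDiff L N ∈ B := by
      apply hsd L hL N hNB
      rw [hcap, Finset.card_pair hxy]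
    exact hline _ hsdm (by simp [Finset.mem_symmDiff, haL, haN])
      (by simp [Finset.mem_symmDiff, hbL, hbN]) (by simp [Finset.mem_symmDiff, hpN, hpL])

set_option maxHeartbeats 1000000 in
include hD hmv in
private lemma elemMove_line_of_mv_eq {a b c d : Ω'} (hab : a ≠ b) (hcd : c ≠ d)
    (heq : mv c d = mv a b) (h1 : (c,d) ≠ (a,b)) (h2 : (c,d) ≠ (b,a)) :
    ({a,b,c,d} : Finset Ω') ∈ B := by
  obtain ⟨hab1, hab2, habL, habF⟩ := hmv.2 a b hab
  have hd : mv a b c = d := by rw [← heq]; exact (hmv.2 c d hcd).1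
  have hca : c ≠ a := by rintro rfl; rw [hab1] at hd; exact h1 (by rw [hd])
  have hcb : c ≠ b := by rintro rfl; rw [hab2] at hd; exact h2 (by rw [hd])
  by_cases hline : ∃ M ∈ B, a ∈ M ∧ b ∈ M ∧ c ∈ M
  · obtain ⟨M, hMB, haM, hbM, hcM⟩ := hline
    obtain ⟨q, hq, hMeq⟩ := elemMove_fourth_point M a b c (hD.2.1 M hMB) haM hbM hcM hab
      hca.symm hcb.symm
    have : mv a b c = q := habL c q (hMeq ▸ hMB)
    rw [hd] at this; subst this
    exact hMeq ▸ hMB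
  · push_neg at hline
    rw [habF c hca hcb (fun M hM h => hline M hM h.1 h.2.1 h.2.2)] at hd
    exact absurd hd hcd

end ElemMoveCountingHelpers

set_option maxHeartbeats 1000000 in
/-- Lemma 5.4: under Hypotheses 4.1 with `n > 2λ+2`, the number of
distinct elementary moves is `|E| = n(n-1)/(2(λ+1))`. -/
theorem elemMoves_count [Fintype Ω] [DecidableEq Ω]
    {B : Set (Finset Ω)} {n lam : ℕ}
    (hD : IsDesign B n lam) (hss : Supersimple B) (hsd : SymmDiffCond B)
    (hRT : IsRegularTwoGraph (collinearTriples B)) (hn : 2 * lam + 2 < n)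
    (mv : Ω → Ω → Equiv.Perm Ω) (hmv : IsElemMoveFn B mv) :
    (elemMoves mv).ncard * (2 * (lam + 1)) = n * (n - 1) := by
  classical
  have hcard4 : ∀ L ∈ B, L.card = 4 := hD.2.1
  have hlam := hD.2.2
  have hncard : Fintype.card Ω = n := hD.1
  set f : Ω × Ω → Equiv.Perm Ω := fun p => mv p.1 p.2 with hf
  set P : Finset (Ω × Ω) := (Finset.univ : Finset Ω).offDiag with hP
  have hPmem : ∀ p : Ω × Ω, p ∈ P ↔ p.1 ≠ p.2 := by
    intro p; simp [hP, Finset.mem_offDiag]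
  have hE : elemMoves mv = ↑(P.image f) := by
    ext g
    simp only [elemMoves, Set.mem_setOf_eq, Finset.coe_image, Set.mem_image, Finset.mem_coe]
    constructor
    · rintro ⟨a, b, hab, rfl⟩; exact ⟨(a,b), (hPmem _).mpr hab, rfl⟩
    · rintro ⟨⟨a,b⟩, hp, rfl⟩; exact ⟨a, b, (hPmem _).mp hp, rfl⟩
  rw [hE, Set.ncard_coe_finset]
  have hfiber : ∀ p ∈ P, (P.filter (fun q => f q = f p)).card = 2 * (lam + 1) := by
    rintro ⟨a, b⟩ hab'
    have hab : a ≠ b := (hPmem _).mp hab'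
    set F : Finset (Ω × Ω) := P.filter (fun q => f q = f (a,b)) with hF
    have hFmem : ∀ q : Ω × Ω, q ∈ F ↔ q.1 ≠ q.2 ∧ mv q.1 q.2 = mv a b := by
      intro q; simp [hF, Finset.mem_filter, hPmem, hf]
    set φ : Ω × Ω → Finset Ω := fun q => {a, b, q.1, q.2} with hφ
    have hpairAB : ∀ c d : Ω, (c,d) = (a,b) ∨ (c,d) = (b,a) →
        ({a, b, c, d} : Finset Ω) = {a, b} := by
      rintro c d (h | h) <;> obtain ⟨rfl, rfl⟩ := Prod.mk.inj h <;>
        (ext s; simp; try tauto)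
    have himg : ↑(F.image φ) = insert ({a,b} : Finset Ω) {L | L ∈ B ∧ ({a,b}:Finset Ω) ⊆ L} := by
      ext t
      simp only [Finset.coe_image, Set.mem_image, Finset.mem_coe, Set.mem_insert_iff,
        Set.mem_setOf_eq]
      constructor
      · rintro ⟨⟨c,d⟩, hq, rfl⟩
        rw [hFmem] at hq
        obtain ⟨hcd, heq⟩ := hq
        by_cases h12 : (c,d) = (a,b) ∨ (c,d) = (b,a)
        · left; exact hpairAB c d h12
        · push_neg at h12
          right
          have hmem := elemMove_line_of_mv_eq hD hmv hab hcd heq h12.1 h12.2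
          exact ⟨hmem, by intro s hs; simp at hs; rcases hs with rfl|rfl <;> simp [hφ]⟩
      · rintro (rfl | ⟨hLB, hsub⟩)
        · exact ⟨(a,b), (hFmem _).mpr ⟨hab, rfl⟩, (hpairAB a b (Or.inl rfl))⟩
        · obtain ⟨c, d, hcd, hc, hd, hteq⟩ := elemMove_line_decomp t a b (hcard4 t hLB)
            (hsub (by simp)) (hsub (by simp)) hab
          refine ⟨(c,d), (hFmem _).mpr ⟨hcd,
            elemMove_mv_eq_of_line hD hss hsd hmv hab (hteq ▸ hLB)⟩, hteq.symm⟩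
    have himgcard : (F.image φ).card = lam + 1 := by
      have h1 : (↑(F.image φ) : Set (Finset Ω)).ncard = (F.image φ).card :=
        Set.ncard_coe_finset _
      rw [himg] at h1
      rw [← h1, Set.ncard_insert_of_notMem, hlam _ (Finset.card_pair hab)]
      rintro ⟨hABB, -⟩
      have := hcard4 _ hABB
      rw [Finset.card_pair hab] at this
      omega
    have hsubfiber : ∀ t ∈ F.image φ, (F.filter (fun q => φ q = t)).card = 2 := by
      intro t ht
      obtain ⟨⟨c, d⟩, hcdF, rfl⟩ := Finset.mem_image.mp ht
      obtain ⟨hcd, heq⟩ := (hFmem _).mp hcdF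
      have hdcF : (d, c) ∈ F :=
        (hFmem _).mpr ⟨hcd.symm, (elemMove_mv_symm hD hmv hcd).trans heq⟩
      have hφdc : φ (d, c) = φ (c, d) := by ext s; simp [hφ]; tauto
      have hfeq : F.filter (fun q => φ q = φ (c,d)) = {(c,d), (d,c)} := by
        ext ⟨e, g⟩
        simp only [Finset.mem_filter, Finset.mem_insert, Finset.mem_singleton]
        constructor
        · rintro ⟨hegF, hφeq⟩
          obtain ⟨heg, heqg⟩ := (hFmem _).mp hegF
          simp only [hφ] at hφeq
          by_cases h12 : (c,d) = (a,b) ∨ (c,d) = (b,a)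
          · have hcdab := hpairAB c d h12
            rw [hcdab] at hφeq
            have he : e ∈ ({a,b} : Finset Ω) := by rw [← hφeq]; simp
            have hg : g ∈ ({a,b} : Finset Ω) := by rw [← hφeq]; simp
            simp only [Finset.mem_insert, Finset.mem_singleton] at he hg
            rcases h12 with h|h <;> obtain ⟨rfl, rfl⟩ := Prod.mk.inj h <;>
              rcases he with rfl|rfl <;> rcases hg with rfl|rfl <;> simp_all
          · push_neg at h12
            have hmem := elemMove_line_of_mv_eq hD hmv hab hcd heq h12.1 h12.2
            obtain ⟨-, hac, had, hbc, hbd, -⟩ :=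
              elemMove_quad_distinct a b c d (hcard4 _ hmem)
            have hcard : ({a,b,c,d} : Finset Ω).card = 4 := hcard4 _ hmem
            have hcard' : ({a,b,e,g} : Finset Ω).card = 4 := by rw [hφeq]; exact hcard
            obtain ⟨-, hae, hag, hbe, hbg, heg'⟩ := elemMove_quad_distinct a b e g hcard'
            have he : e ∈ ({a,b,c,d} : Finset Ω) := by rw [← hφeq]; simp
            have hg : g ∈ ({a,b,c,d} : Finset Ω) := by rw [← hφeq]; simp
            simp only [Finset.mem_insert, Finset.mem_singleton] at he hg
            rcases he with rfl|rfl|rfl|rfl <;> rcases hg with rfl|rfl|rfl|rfl <;> simp_all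
        · rintro (h | h) <;> obtain ⟨rfl, rfl⟩ := Prod.mk.inj h
          · exact ⟨hcdF, rfl⟩
          · exact ⟨hdcF, hφdc⟩
      rw [hfeq, Finset.card_insert_of_notMem
        (by simp [Prod.ext_iff]; rintro rfl; exact fun _ => hcd rfl),
        Finset.card_singleton]
    rw [show (2 * (lam + 1)) = (lam + 1) * 2 from Nat.mul_comm _ _]
    calc F.card = ∑ t ∈ F.image φ, (F.filter (fun q => φ q = t)).card :=
          Finset.card_eq_sum_card_image φ F
      _ = ∑ _t ∈ F.image φ, 2 := Finset.sum_congr rfl hsubfiber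
      _ = (F.image φ).card * 2 := by rw [Finset.sum_const, smul_eq_mul]
      _ = (lam + 1) * 2 := by rw [himgcard]
  have hPcard : P.card = n * (n - 1) := by
    rw [hP, Finset.offDiag_card, Finset.card_univ, hncard, Nat.mul_sub_one]
  calc (P.image f).card * (2 * (lam + 1))
      = ∑ _g ∈ P.image f, (2 * (lam + 1)) := by rw [Finset.sum_const, smul_eq_mul]
    _ = ∑ g ∈ P.image f, (P.filter (fun q => f q = g)).card := by
        refine Finset.sum_congr rfl fun g hg => ?_
        obtain ⟨p, hp, rfl⟩ := Finset.mem_image.mp hg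
        exact (hfiber p hp).symm
    _ = P.card := (Finset.card_eq_sum_card_image f P).symm
    _ = n * (n - 1) := hPcard
end

section
/- Let D1=(Ω1,B1) and D2=(Ω2,B2) be two designs, each a supersimple 2-(n_i,4,λ_i) design satisfying (△) whose collinear triples form a regular two-graph on its point set, and with n_i > 2λ_i + 2 (i = 1,2). Let ∞1 ∈ Ω1 and ∞2 ∈ Ω2. If the derived graphs G_{D1,∞1} and G_{D2,∞2} are isomorphic as graphs, then D1 and D2 are isomorphic as designs. -/
open Equiv

variable {Ω : Type*}

-- ===================== auxiliary lemmas =====================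

private lemma dg_ne_of_mem_notmem {α : Type*} {s t : Finset α} {x : α}
    (hx : x ∈ s) (hx' : x ∉ t) : s ≠ t := fun h => hx' (h ▸ hx)

section Aux
set_option maxHeartbeats 2000000
variable {α : Type*} [DecidableEq α]

lemma dg_triple_card {a b c : α} (hab : a ≠ b) (hac : a ≠ c) (hbc : b ≠ c) :
    ({a, b, c} : Finset α).card = 3 := by
  rw [Finset.card_insert_of_notMem (by simp [hab, hac]),
      Finset.card_insert_of_notMem (by simp [hbc]), Finset.card_singleton]

lemma dg_quad_card {a b c d : α} (hab : a ≠ b) (hac : a ≠ c) (had : a ≠ d)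
    (hbc : b ≠ c) (hbd : b ≠ d) (hcd : c ≠ d) :
    ({a, b, c, d} : Finset α).card = 4 := by
  rw [Finset.card_insert_of_notMem (by simp [hab, hac, had]), dg_triple_card hbc hbd hcd]

lemma dg_perm12 (a b c : α) : ({a, b, c} : Finset α) = {b, a, c} := by
  ext y; simp; tauto

lemma dg_perm23 (a b c : α) : ({a, b, c} : Finset α) = {a, c, b} := by
  ext y; simp; tauto

lemma dg_rot (a b c : α) : ({a, b, c} : Finset α) = {c, a, b} := by
  rw [dg_perm23, dg_perm12]

lemma dg_quad_sdiff_outer {p b c d : α} (hpb : p ≠ b) (hpc : p ≠ c) (hbd : b ≠ d)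
    (hcd : c ≠ d) : ({p, b, c, d} : Finset α) \ {p, d} = {b, c} := by
  ext y
  simp only [Finset.mem_sdiff, Finset.mem_insert, Finset.mem_singleton]
  constructor
  · rintro ⟨rfl | rfl | rfl | rfl, hy⟩ <;> tauto
  · rintro (rfl | rfl) <;> exact ⟨by tauto, by tauto⟩

lemma dg_quad_sdiff_inner {p b c d : α} (hpb : p ≠ b) (hpc : p ≠ c) (hbd : b ≠ d)
    (hcd : c ≠ d) : ({p, b, c, d} : Finset α) \ {b, c} = {p, d} := by
  ext y
  simp only [Finset.mem_sdiff, Finset.mem_insert, Finset.mem_singleton]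
  constructor
  · rintro ⟨rfl | rfl | rfl | rfl, hy⟩ <;> tauto
  · rintro (rfl | rfl) <;> exact ⟨by tauto, by tauto⟩

lemma dg_triple_subset_quad1 (p b c d : α) : ({p, b, c} : Finset α) ⊆ {p, b, c, d} := by
  simp only [Finset.insert_subset_iff, Finset.singleton_subset_iff, Finset.mem_insert,
    Finset.mem_singleton]
  tauto

lemma dg_triple_subset_quad2 (p b c d : α) : ({p, b, d} : Finset α) ⊆ {p, b, c, d} := by
  simp only [Finset.insert_subset_iff, Finset.singleton_subset_iff, Finset.mem_insert,
    Finset.mem_singleton]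
  tauto

lemma dg_triple_subset_quad3 (p b c d : α) : ({p, c, d} : Finset α) ⊆ {p, b, c, d} := by
  simp only [Finset.insert_subset_iff, Finset.singleton_subset_iff, Finset.mem_insert,
    Finset.mem_singleton]
  tauto

lemma dg_triple_distinct {a b c : α} (h : ({a, b, c} : Finset α).card = 3) :
    a ≠ b ∧ a ≠ c ∧ b ≠ c := by
  refine ⟨?_, ?_, ?_⟩ <;> rintro rfl
  · have he : ({a, a, c} : Finset α) = {a, c} := by ext x; simp
    rw [he] at h
    have := Finset.card_insert_le a ({c} : Finset α)
    simp at this; omega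
  · have he : ({a, b, a} : Finset α) = {a, b} := by ext x; simp; tauto
    rw [he] at h
    have := Finset.card_insert_le a ({b} : Finset α)
    simp at this; omega
  · have he : ({a, b, b} : Finset α) = {a, b} := by ext x; simp
    rw [he] at h
    have := Finset.card_insert_le a ({b} : Finset α)
    simp at this; omega

lemma dg_card_four {s : Finset α} (h : s.card = 4) :
    ∃ p b c d : α, p ≠ b ∧ p ≠ c ∧ p ≠ d ∧ b ≠ c ∧ b ≠ d ∧ c ≠ d ∧ s = {p, b, c, d} := by
  obtain ⟨p, t, hpt, hs, ht3⟩ := Finset.card_eq_succ.mp h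
  obtain ⟨b, c, d, hbc, hbd, hcd, rfl⟩ := Finset.card_eq_three.mp ht3
  subst hs
  refine ⟨p, b, c, d, ?_, ?_, ?_, hbc, hbd, hcd, rfl⟩ <;>
    (rintro rfl; apply hpt; simp)

set_option maxHeartbeats 2000000 in
lemma dg_two_graph_parity {C : Set (Finset α)}
    (hC3 : ∀ t ∈ C, t.card = 3)
    (h4 : ∀ q : Finset α, q.card = 4 →
      {t ∈ C | t ⊆ q}.ncard = 0 ∨ {t ∈ C | t ⊆ q}.ncard = 2 ∨ {t ∈ C | t ⊆ q}.ncard = 4)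
    {a b c d : α} (hab : a ≠ b) (hac : a ≠ c) (had : a ≠ d)
    (hbc : b ≠ c) (hbd : b ≠ d) (hcd : c ≠ d) :
    ((({a, b, c} : Finset α) ∈ C ↔ ({a, b, d} : Finset α) ∈ C) ↔
      (({a, c, d} : Finset α) ∈ C ↔ ({b, c, d} : Finset α) ∈ C)) := by
  classical
  set q : Finset α := {a, b, c, d} with hq
  have hq4 : q.card = 4 := dg_quad_card hab hac had hbc hbd hcd
  have hsub : ∀ t : Finset α, t.card = 3 → t ⊆ q →
      t = {a, b, c} ∨ t = {a, b, d} ∨ t = {a, c, d} ∨ t = {b, c, d} := by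
    intro t ht hts
    have hqt : (q \ t).card = 1 := by rw [Finset.card_sdiff_of_subset hts, hq4, ht]
    obtain ⟨x, hx⟩ := Finset.card_eq_one.mp hqt
    have hxm : x ∈ q \ t := hx ▸ Finset.mem_singleton_self x
    have hxq : x ∈ q := (Finset.mem_sdiff.mp hxm).1
    have hxt : x ∉ t := (Finset.mem_sdiff.mp hxm).2
    have ht' : t = q.erase x := by
      apply Finset.eq_of_subset_of_card_le
      · intro y hy; exact Finset.mem_erase.mpr ⟨fun h => hxt (h ▸ hy), hts hy⟩
      · rw [Finset.card_erase_of_mem hxq, hq4, ht]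
    have hxq' : x = a ∨ x = b ∨ x = c ∨ x = d := by
      simpa [hq] using hxq
    rcases hxq' with rfl | rfl | rfl | rfl
    · right; right; right
      rw [ht', hq, Finset.erase_insert (by simp [hab, hac, had])]
    · right; right; left
      rw [ht', hq, Finset.erase_insert_of_ne hab,
        Finset.erase_insert (by simp [hbc, hbd])]
    · right; left
      rw [ht', hq, Finset.erase_insert_of_ne hac,
        Finset.erase_insert_of_ne hbc, Finset.erase_insert (by simp [hcd])]
    · left
      rw [ht', hq, Finset.erase_insert_of_ne had,
        Finset.erase_insert_of_ne hbd, Finset.erase_insert_of_ne hcd,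
        Finset.erase_singleton]
      simp
  have hseteq : {t ∈ C | t ⊆ q} =
      ↑((({({a,b,c} : Finset α), {a,b,d}, {a,c,d}, {b,c,d}} : Finset (Finset α))).filter (· ∈ C)) := by
    ext t
    simp only [Set.mem_setOf_eq, Finset.coe_filter, Finset.mem_insert, Finset.mem_singleton]
    constructor
    · rintro ⟨htC, hts⟩
      exact ⟨hsub t (hC3 t htC) hts, htC⟩
    · rintro ⟨h, htC⟩
      refine ⟨htC, ?_⟩
      rcases h with rfl | rfl | rfl | rfl <;> intro y hy <;> simp [hq] at hy ⊢ <;> tauto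
  have h024 := h4 q hq4
  rw [hseteq, Set.ncard_coe_finset] at h024
  have h12 : ({a,b,c} : Finset α) ≠ {a,b,d} :=
    dg_ne_of_mem_notmem (show c ∈ _ by simp) (by simp [hac.symm, hbc.symm, hcd])
  have h13 : ({a,b,c} : Finset α) ≠ {a,c,d} :=
    dg_ne_of_mem_notmem (show b ∈ _ by simp) (by simp [hab.symm, hbc, hbd])
  have h14 : ({a,b,c} : Finset α) ≠ {b,c,d} :=
    dg_ne_of_mem_notmem (show a ∈ _ by simp) (by simp [hab, hac, had])
  have h23 : ({a,b,d} : Finset α) ≠ {a,c,d} :=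
    dg_ne_of_mem_notmem (show b ∈ _ by simp) (by simp [hab.symm, hbc, hbd])
  have h24 : ({a,b,d} : Finset α) ≠ {b,c,d} :=
    dg_ne_of_mem_notmem (show a ∈ _ by simp) (by simp [hab, hac, had])
  have h34 : ({a,c,d} : Finset α) ≠ {b,c,d} :=
    dg_ne_of_mem_notmem (show a ∈ _ by simp) (by simp [hab, hac, had])
  have hcard : ((({({a,b,c} : Finset α), {a,b,d}, {a,c,d}, {b,c,d}} : Finset (Finset α))).filter
      (· ∈ C)).card =
      (if ({a,b,c} : Finset α) ∈ C then 1 else 0) + ((if ({a,b,d} : Finset α) ∈ C then 1 else 0) +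
        ((if ({a,c,d} : Finset α) ∈ C then 1 else 0) + (if ({b,c,d} : Finset α) ∈ C then 1 else 0))) := by
    rw [Finset.card_filter, Finset.sum_insert (by simp [h12, h13, h14]),
      Finset.sum_insert (by simp [h23, h24]), Finset.sum_insert (by simp [h34]),
      Finset.sum_singleton]
  rw [hcard] at h024
  by_cases p1 : ({a,b,c} : Finset α) ∈ C <;>
    by_cases p2 : ({a,b,d} : Finset α) ∈ C <;>
      by_cases p3 : ({a,c,d} : Finset α) ∈ C <;>
        by_cases p4 : ({b,c,d} : Finset α) ∈ C <;>
          simp only [p1, p2, p3, p4, if_true, if_false, iff_true, iff_false,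
            true_iff, false_iff, ite_true, ite_false] at h024 ⊢ <;>
          first
            | omega
            | tauto

lemma dg_mem_collinear {B : Set (Finset α)} {L : Finset α} (hL : L ∈ B)
    {a b c : α} (hab : a ≠ b) (hac : a ≠ c) (hbc : b ≠ c)
    (hsub : ({a, b, c} : Finset α) ⊆ L) : ({a, b, c} : Finset α) ∈ collinearTriples B :=
  ⟨dg_triple_card hab hac hbc, L, hL, hsub⟩

lemma dg_exists_noncollinear [Fintype α] {B : Set (Finset α)} {n lam : ℕ}
    (hD : IsDesign B n lam) (hn : 2 * lam + 2 < n) {a b : α} (hab : a ≠ b) :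
    ∃ e : α, e ≠ a ∧ e ≠ b ∧ ({a, b, e} : Finset α) ∉ collinearTriples B := by
  classical
  by_contra hcon
  push_neg at hcon
  set LS : Set (Finset α) := {L ∈ B | ({a, b} : Finset α) ⊆ L} with hLS
  have hlam : LS.ncard = lam := hD.2.2 {a, b}
    (by rw [Finset.card_insert_of_notMem (by simp [hab]), Finset.card_singleton])
  have hfin : LS.Finite := Set.toFinite _
  have hFScard : hfin.toFinset.card = lam := by
    rw [← Set.ncard_eq_toFinset_card LS hfin, hlam]
  have hPsub : ((Finset.univ.erase a).erase b) ⊆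
      hfin.toFinset.biUnion (fun L => (L.erase a).erase b) := by
    intro e he
    have heb : e ≠ b := (Finset.mem_erase.mp he).1
    have hea : e ≠ a := (Finset.mem_erase.mp (Finset.mem_erase.mp he).2).1
    have htC := hcon e hea heb
    obtain ⟨hc3, L, hLB, hsubL⟩ := htC
    have hLmem : L ∈ hfin.toFinset := by
      rw [Set.Finite.mem_toFinset]
      exact ⟨hLB, fun y hy => hsubL (by simp at hy; rcases hy with rfl | rfl <;> simp)⟩
    refine Finset.mem_biUnion.mpr ⟨L, hLmem, ?_⟩
    exact Finset.mem_erase.mpr ⟨heb, Finset.mem_erase.mpr ⟨hea, hsubL (by simp)⟩⟩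
  have hle : ((Finset.univ.erase a).erase b).card ≤ lam * 2 := by
    calc ((Finset.univ.erase a).erase b).card
        ≤ (hfin.toFinset.biUnion (fun L => (L.erase a).erase b)).card :=
          Finset.card_le_card hPsub
      _ ≤ ∑ L ∈ hfin.toFinset, ((L.erase a).erase b).card := Finset.card_biUnion_le
      _ ≤ ∑ _L ∈ hfin.toFinset, 2 := by
          apply Finset.sum_le_sum
          intro L hL
          have hLLS : L ∈ LS := (Set.Finite.mem_toFinset hfin).mp hL
          have haL : a ∈ L := hLLS.2 (by simp)
          have hbL : b ∈ L := hLLS.2 (by simp)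
          have hc4 : L.card = 4 := hD.2.1 L hLLS.1
          rw [Finset.card_erase_of_mem (Finset.mem_erase.mpr ⟨hab.symm, hbL⟩),
            Finset.card_erase_of_mem haL, hc4]
      _ = lam * 2 := by rw [Finset.sum_const, hFScard, smul_eq_mul]
  have hcu : ((Finset.univ.erase a).erase b).card = n - 2 := by
    rw [Finset.card_erase_of_mem (Finset.mem_erase.mpr ⟨hab.symm, Finset.mem_univ b⟩),
      Finset.card_erase_of_mem (Finset.mem_univ a), Finset.card_univ, hD.1]
    omega
  omega

lemma dg_line_unique {B : Set (Finset α)} (hss : Supersimple B)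
    {L₁ L₂ t : Finset α} (hL₁ : L₁ ∈ B) (hL₂ : L₂ ∈ B) (ht : t.card = 3)
    (h1 : t ⊆ L₁) (h2 : t ⊆ L₂) : L₁ = L₂ := by
  by_contra hne
  have h3 : (3 : ℕ) ≤ (L₁ ∩ L₂).card := by
    rw [← ht]; exact Finset.card_le_card (Finset.subset_inter h1 h2)
  have := hss L₁ hL₁ L₂ hL₂ hne
  omega

lemma dg_swap_mem {B : Set (Finset α)} (hss : Supersimple B) (hsd : SymmDiffCond B)
    {L : Finset α} (hL : L ∈ B) (hL4 : L.card = 4)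
    {u v x : α} (hu : u ∈ L) (hv : v ∈ L) (huv : u ≠ v) (hx : x ∉ L)
    (hC : ({u, v, x} : Finset α) ∈ collinearTriples B) :
    insert x (L \ {u, v}) ∈ collinearTriples B := by
  obtain ⟨h3, M, hM, hsub⟩ := hC
  have hxM : x ∈ M := hsub (by simp)
  have huM : u ∈ M := hsub (by simp)
  have hvM : v ∈ M := hsub (by simp)
  have hML : M ≠ L := fun h => hx (h ▸ hxM)
  have hpair : ({u, v} : Finset α).card = 2 := by
    rw [Finset.card_insert_of_notMem (by simp [huv]), Finset.card_singleton]
  have hinter : ({u, v} : Finset α) = M ∩ L := by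
    apply Finset.eq_of_subset_of_card_le
    · intro y hy
      simp only [Finset.mem_insert, Finset.mem_singleton] at hy
      rcases hy with rfl | rfl
      · exact Finset.mem_inter.mpr ⟨huM, hu⟩
      · exact Finset.mem_inter.mpr ⟨hvM, hv⟩
    · rw [hpair]; exact hss M hM L hL hML
  have hsymm : symmDiff M L ∈ B := hsd M hM L hL (by rw [← hinter, hpair])
  have hsdsub : ({u, v} : Finset α) ⊆ L := by
    intro y hy
    simp only [Finset.mem_insert, Finset.mem_singleton] at hy
    rcases hy with rfl | rfl <;> assumption
  refine ⟨?_, symmDiff M L, hsymm, ?_⟩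
  · rw [Finset.card_insert_of_notMem (fun hmem => hx (Finset.mem_sdiff.mp hmem).1),
      Finset.card_sdiff_of_subset hsdsub, hL4, hpair]
  · intro y hy
    rcases Finset.mem_insert.mp hy with rfl | hy
    · rw [Finset.mem_symmDiff]; left; exact ⟨hxM, hx⟩
    · have hyL : y ∈ L := (Finset.mem_sdiff.mp hy).1
      have hyuv : y ∉ ({u, v} : Finset α) := (Finset.mem_sdiff.mp hy).2
      rw [Finset.mem_symmDiff]; right
      refine ⟨hyL, fun hyM => hyuv ?_⟩
      rw [hinter]; exact Finset.mem_inter.mpr ⟨hyM, hyL⟩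

lemma dg_exists_fourth {B : Set (Finset α)} (hcard4 : ∀ L ∈ B, L.card = 4)
    {t : Finset α} (ht : t ∈ collinearTriples B) :
    ∃ d, d ∉ t ∧ insert d t ∈ B := by
  obtain ⟨h3, L, hLB, hsub⟩ := ht
  have h1 : (L \ t).card = 1 := by rw [Finset.card_sdiff_of_subset hsub, hcard4 L hLB, h3]
  obtain ⟨d, hd⟩ := Finset.card_eq_one.mp h1
  have hdL : d ∈ L \ t := hd ▸ Finset.mem_singleton_self d
  refine ⟨d, (Finset.mem_sdiff.mp hdL).2, ?_⟩
  have heq : insert d t = L := by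
    apply Finset.eq_of_subset_of_card_le
    · intro y hy
      rcases Finset.mem_insert.mp hy with rfl | hy
      · exact (Finset.mem_sdiff.mp hdL).1
      · exact hsub hy
    · rw [hcard4 L hLB, Finset.card_insert_of_notMem (Finset.mem_sdiff.mp hdL).2, h3]
  rwa [heq]

/-- `w` is the triangle-witness of the edge `{b,c}` of the derived graph at `p`,
expressed purely in terms of collinear triples. -/
def Wpred (B : Set (Finset α)) (p b c w : α) : Prop :=
  w ≠ p ∧ w ≠ b ∧ w ≠ c ∧
  ({p, b, w} : Finset α) ∈ collinearTriples B ∧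
  ({p, c, w} : Finset α) ∈ collinearTriples B ∧
  ∀ x : α, x ≠ p → x ≠ b → x ≠ c → x ≠ w →
    ((({p, x, b} : Finset α) ∈ collinearTriples B ↔
        ({p, x, c} : Finset α) ∈ collinearTriples B) ↔
      ({p, x, w} : Finset α) ∈ collinearTriples B)

lemma dg_line_witness {B : Set (Finset α)}
    (hcard4 : ∀ L ∈ B, L.card = 4) (hss : Supersimple B) (hsd : SymmDiffCond B)
    (hRT : IsRegularTwoGraph (collinearTriples B))
    {p b c d : α} (hpb : p ≠ b) (hpc : p ≠ c) (hpd : p ≠ d)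
    (hbc : b ≠ c) (hbd : b ≠ d) (hcd : c ≠ d)
    (hL : ({p, b, c, d} : Finset α) ∈ B) : Wpred B p b c d := by
  have hC3 := hRT.1
  have h4 := hRT.2.2
  have hL4 : ({p, b, c, d} : Finset α).card = 4 := hcard4 _ hL
  refine ⟨hpd.symm, hbd.symm, hcd.symm, ?_, ?_, ?_⟩
  · exact dg_mem_collinear hL hpb hpd hbd (dg_triple_subset_quad2 p b c d)
  · exact dg_mem_collinear hL hpc hpd hcd (dg_triple_subset_quad3 p b c d)
  intro x hxp hxb hxc hxd
  have hxL : x ∉ ({p, b, c, d} : Finset α) := by simp [hxp, hxb, hxc, hxd]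
  have hpbc : ({p, b, c} : Finset α) ∈ collinearTriples B :=
    dg_mem_collinear hL hpb hpc hbc (dg_triple_subset_quad1 p b c d)
  have par_d := dg_two_graph_parity hC3 h4 hxp.symm hpb hpc hxb hxc hbc
  -- par_d : ({p,x,b} ↔ {p,x,c}) ↔ ({p,b,c} ↔ {x,b,c})
  have s_d : ({p, x, d} : Finset α) ∈ collinearTriples B →
      ({x, b, c} : Finset α) ∈ collinearTriples B := by
    intro h
    have h' : ({p, d, x} : Finset α) ∈ collinearTriples B := by
      rw [dg_perm23]; exact h
    have := dg_swap_mem hss hsd hL hL4 (show p ∈ _ by simp) (show d ∈ _ by simp)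
      hpd hxL h'
    rwa [dg_quad_sdiff_outer hpb hpc hbd hcd] at this
  have s_bc : ({x, b, c} : Finset α) ∈ collinearTriples B →
      ({p, x, d} : Finset α) ∈ collinearTriples B := by
    intro h
    have h' : ({b, c, x} : Finset α) ∈ collinearTriples B := by
      rw [dg_rot]; exact h
    have := dg_swap_mem hss hsd hL hL4 (show b ∈ _ by simp) (show c ∈ _ by simp)
      hbc hxL h'
    rw [dg_quad_sdiff_inner hpb hpc hbd hcd] at this
    rwa [dg_perm12] at this
  exact par_d.trans ⟨fun h => s_bc (h.mp hpbc), fun hg => iff_of_true hpbc (s_d hg)⟩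

lemma dg_witness_unique [Fintype α] {B : Set (Finset α)} {n lam : ℕ}
    (hD : IsDesign B n lam) (hn : 2 * lam + 2 < n)
    (hRT : IsRegularTwoGraph (collinearTriples B))
    {p b c w w' : α} (h : Wpred B p b c w) (h' : Wpred B p b c w') : w = w' := by
  classical
  by_contra hne
  have hC3 := hRT.1
  have h4 := hRT.2.2
  obtain ⟨hwp, hwb, hwc, hpbw, hpcw, hodd⟩ := h
  obtain ⟨hw'p, hw'b, hw'c, hpbw', hpcw', hodd'⟩ := h'
  obtain ⟨hpb, hpw, hbw⟩ := dg_triple_distinct hpbw.1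
  obtain ⟨hpc, -, hcw⟩ := dg_triple_distinct hpcw.1
  obtain ⟨-, hpw', hbw'⟩ := dg_triple_distinct hpbw'.1
  obtain ⟨-, -, hcw'⟩ := dg_triple_distinct hpcw'.1
  have hpww' : ({p, w, w'} : Finset α) ∈ collinearTriples B := by
    have hw := hodd' w hwp hwb hwc hne
    rw [dg_perm23 p w b, dg_perm23 p w c] at hw
    exact hw.mp (iff_of_true hpbw hpcw)
  have key : ∀ e : α, e ≠ w → e ≠ w' → ({w, w', e} : Finset α) ∈ collinearTriples B := by
    intro e hew hew'
    by_cases hep : e = p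
    · subst hep
      rw [dg_rot]; exact hpww'
    by_cases heb : e = b
    · subst heb
      have par := dg_two_graph_parity hC3 h4 hpb hpw hpw' hbw hbw' hne
      -- ({p,b,w} ↔ {p,b,w'}) ↔ ({p,w,w'} ↔ {b,w,w'})
      have hbww' : ({e, w, w'} : Finset α) ∈ collinearTriples B :=
        (par.mp (iff_of_true hpbw hpbw')).mp hpww'
      rw [dg_rot]; exact hbww'
    by_cases hec : e = c
    · subst hec
      have par := dg_two_graph_parity hC3 h4 hpc hpw hpw' hcw hcw' hne
      have hcww' : ({e, w, w'} : Finset α) ∈ collinearTriples B :=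
        (par.mp (iff_of_true hpcw hpcw')).mp hpww'
      rw [dg_rot]; exact hcww'
    · have h1 := hodd e hep heb hec hew
      have h2 := hodd' e hep heb hec hew'
      have hpe : p ≠ e := fun h => hep h.symm
      have par := dg_two_graph_parity hC3 h4 hpe hpw hpw' hew hew' hne
      -- ({p,e,w} ↔ {p,e,w'}) ↔ ({p,w,w'} ↔ {e,w,w'})
      have heww' : ({e, w, w'} : Finset α) ∈ collinearTriples B :=
        (par.mp (h1.symm.trans h2)).mp hpww'
      rw [dg_rot]; exact heww'
  obtain ⟨e, hew, hew', hnc⟩ := dg_exists_noncollinear hD hn hne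
  exact hnc (key e hew hew')


lemma dg_wpred_map {Ω₂ : Type*} [DecidableEq Ω₂] {B : Set (Finset α)} {B₂ : Set (Finset Ω₂)}
    (φ : α ≃ Ω₂)
    (hφ : ∀ a b c : α, ({a, b, c} : Finset α) ∈ collinearTriples B ↔
      ({φ a, φ b, φ c} : Finset Ω₂) ∈ collinearTriples B₂)
    {p b c w : α} (h : Wpred B p b c w) :
    Wpred B₂ (φ p) (φ b) (φ c) (φ w) := by
  obtain ⟨hwp, hwb, hwc, hpbw, hpcw, hodd⟩ := h
  refine ⟨φ.injective.ne hwp, φ.injective.ne hwb, φ.injective.ne hwc,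
    (hφ p b w).mp hpbw, (hφ p c w).mp hpcw, ?_⟩
  intro x2 hx2p hx2b hx2c hx2w
  have hx2 : x2 = φ (φ.symm x2) := (φ.apply_symm_apply x2).symm
  have h1 : φ.symm x2 ≠ p := fun h => hx2p (by rw [hx2, h])
  have h2 : φ.symm x2 ≠ b := fun h => hx2b (by rw [hx2, h])
  have h3 : φ.symm x2 ≠ c := fun h => hx2c (by rw [hx2, h])
  have h4 : φ.symm x2 ≠ w := fun h => hx2w (by rw [hx2, h])
  have := hodd (φ.symm x2) h1 h2 h3 h4
  rw [hφ p (φ.symm x2) b, hφ p (φ.symm x2) c, hφ p (φ.symm x2) w] at this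
  rw [hx2]
  exact this

end Aux

section Ext
variable {Ω₁ Ω₂ : Type*} [DecidableEq Ω₁] [DecidableEq Ω₂]

def dgExtendEquiv (i₁ : Ω₁) (i₂ : Ω₂)
    (g : {x : Ω₁ // x ≠ i₁} ≃ {y : Ω₂ // y ≠ i₂}) : Ω₁ ≃ Ω₂ where
  toFun x := if h : x = i₁ then i₂ else (g ⟨x, h⟩).1
  invFun y := if h : y = i₂ then i₁ else (g.symm ⟨y, h⟩).1
  left_inv x := by
    by_cases h : x = i₁
    · simp [h]
    · simp only [dif_neg h]
      rw [dif_neg (g ⟨x, h⟩).2]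
      simp
  right_inv y := by
    by_cases h : y = i₂
    · simp [h]
    · simp only [dif_neg h]
      rw [dif_neg (g.symm ⟨y, h⟩).2]
      simp

lemma dgExt_inf (i₁ : Ω₁) (i₂ : Ω₂) (g : {x : Ω₁ // x ≠ i₁} ≃ {y : Ω₂ // y ≠ i₂}) :
    dgExtendEquiv i₁ i₂ g i₁ = i₂ := dif_pos rfl

lemma dgExt_ne (i₁ : Ω₁) (i₂ : Ω₂) (g : {x : Ω₁ // x ≠ i₁} ≃ {y : Ω₂ // y ≠ i₂})
    {x : Ω₁} (h : x ≠ i₁) : dgExtendEquiv i₁ i₂ g x = (g ⟨x, h⟩).1 := dif_neg h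

lemma dgExt_ne2 (i₁ : Ω₁) (i₂ : Ω₂) (g : {x : Ω₁ // x ≠ i₁} ≃ {y : Ω₂ // y ≠ i₂})
    {x : Ω₁} (h : x ≠ i₁) : dgExtendEquiv i₁ i₂ g x ≠ i₂ := by
  rw [dgExt_ne i₁ i₂ g h]; exact (g ⟨x, h⟩).2

end Ext


lemma dg_iff_juggle {P1 P2 P3 Q1 Q2 Q3 G1 G2 : Prop}
    (h1 : (P1 ↔ P2) ↔ (P3 ↔ G1)) (h2 : (Q1 ↔ Q2) ↔ (Q3 ↔ G2))
    (e1 : P1 ↔ Q1) (e2 : P2 ↔ Q2) (e3 : P3 ↔ Q3) : G1 ↔ G2 := by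
  rw [← e1, ← e2, ← e3] at h2
  by_cases hP1 : P1 <;> by_cases hP2 : P2 <;> by_cases hP3 : P3 <;> simp_all

section Ins
variable {α : Type*} [DecidableEq α]

lemma dg_insert4 (a b c d : α) : insert d ({a, b, c} : Finset α) = {a, b, c, d} := by
  ext y; simp; tauto

end Ins

/-- Lemma 6.6: if two supersimple `2-(n_i,4,λ_i)` designs satisfying
(△), whose collinear triples form regular two-graphs, with `n_i > 2λ_i + 2`, have
isomorphic derived graphs (at points `∞_1`, `∞_2`), then the designs are isomorphic. -/
theorem designIso_of_derivedGraph_iso {Ω₁ Ω₂ : Type*}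
    [Fintype Ω₁] [DecidableEq Ω₁] [Fintype Ω₂] [DecidableEq Ω₂]
    {B₁ : Set (Finset Ω₁)} {B₂ : Set (Finset Ω₂)} {n₁ lam₁ n₂ lam₂ : ℕ}
    (hD₁ : IsDesign B₁ n₁ lam₁) (hss₁ : Supersimple B₁) (hsd₁ : SymmDiffCond B₁)
    (hRT₁ : IsRegularTwoGraph (collinearTriples B₁)) (hn₁ : 2 * lam₁ + 2 < n₁)
    (hD₂ : IsDesign B₂ n₂ lam₂) (hss₂ : Supersimple B₂) (hsd₂ : SymmDiffCond B₂)
    (hRT₂ : IsRegularTwoGraph (collinearTriples B₂)) (hn₂ : 2 * lam₂ + 2 < n₂)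
    (inf₁ : Ω₁) (inf₂ : Ω₂)
    (hiso : Nonempty (derivedGraph B₁ inf₁ ≃g derivedGraph B₂ inf₂)) :
    DesignIso B₁ B₂ := by
  classical
  obtain ⟨g⟩ := hiso
  set φ : Ω₁ ≃ Ω₂ := dgExtendEquiv inf₁ inf₂ g.toEquiv with hφdef
  have hφinf : φ inf₁ = inf₂ := dgExt_inf _ _ _
  have hφne : ∀ (x : Ω₁) (h : x ≠ inf₁),
      φ x = ((g ⟨x, h⟩ : {y : Ω₂ // y ≠ inf₂}) : Ω₂) :=
    fun x h => dgExt_ne _ _ _ h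
  have hφne2 : ∀ (x : Ω₁) (h : x ≠ inf₁), φ x ≠ inf₂ := fun x h => dgExt_ne2 _ _ _ h
  -- transport of edges of the derived graphs
  have hedge : ∀ (u v : Ω₁) (hu : u ≠ inf₁) (hv : v ≠ inf₁), u ≠ v →
      (({inf₁, u, v} : Finset Ω₁) ∈ collinearTriples B₁ ↔
        ({inf₂, φ u, φ v} : Finset Ω₂) ∈ collinearTriples B₂) := by
    intro u v hu hv huv
    have hne : (⟨u, hu⟩ : {x : Ω₁ // x ≠ inf₁}) ≠ ⟨v, hv⟩ :=
      fun he => huv (congrArg Subtype.val he)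
    have h2 := g.map_adj_iff (v := (⟨u, hu⟩ : {x : Ω₁ // x ≠ inf₁})) (w := ⟨v, hv⟩)
    constructor
    · intro h
      have hadj₁ : (derivedGraph B₁ inf₁).Adj ⟨u, hu⟩ ⟨v, hv⟩ := ⟨hne, h⟩
      have hadj₂ := h2.mpr hadj₁
      have h3 := hadj₂.2
      rwa [← hφne u hu, ← hφne v hv] at h3
    · intro h
      have hadj₂ : (derivedGraph B₂ inf₂).Adj (g ⟨u, hu⟩) (g ⟨v, hv⟩) := by
        refine ⟨fun he => hne (g.toEquiv.injective he), ?_⟩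
        rwa [hφne u hu, hφne v hv] at h
      exact (h2.mp hadj₂).2
  -- transport of all collinear triples
  have hφC : ∀ a b c : Ω₁, (({a, b, c} : Finset Ω₁) ∈ collinearTriples B₁ ↔
      ({φ a, φ b, φ c} : Finset Ω₂) ∈ collinearTriples B₂) := by
    intro a b c
    by_cases hab : a = b
    · subst hab
      constructor <;> intro h <;> exact absurd rfl (dg_triple_distinct h.1).1
    by_cases hac : a = c
    · subst hac
      constructor <;> intro h <;> exact absurd rfl (dg_triple_distinct h.1).2.1
    by_cases hbc : b = c
    · subst hbc
      constructor <;> intro h <;> exact absurd rfl (dg_triple_distinct h.1).2.2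
    by_cases ha : a = inf₁
    · have hb' : b ≠ inf₁ := fun h => hab (by rw [ha, h])
      have hc' : c ≠ inf₁ := fun h => hac (by rw [ha, h])
      rw [ha, hφinf]
      exact hedge b c hb' hc' hbc
    by_cases hb : b = inf₁
    · have hc' : c ≠ inf₁ := fun h => hbc (by rw [hb, h])
      rw [dg_perm12 a b c, dg_perm12 (φ a) (φ b) (φ c), hb, hφinf]
      exact hedge a c ha hc' hac
    by_cases hc : c = inf₁
    · rw [dg_rot a b c, dg_rot (φ a) (φ b) (φ c), hc, hφinf]
      exact hedge a b ha hb hab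
    · have par₁ := dg_two_graph_parity hRT₁.1 hRT₁.2.2
        (Ne.symm ha) (Ne.symm hb) (Ne.symm hc) hab hac hbc
      have par₂ := dg_two_graph_parity hRT₂.1 hRT₂.2.2
        (Ne.symm (hφne2 a ha)) (Ne.symm (hφne2 b hb)) (Ne.symm (hφne2 c hc))
        (φ.injective.ne hab) (φ.injective.ne hac) (φ.injective.ne hbc)
      exact dg_iff_juggle par₁ par₂ (hedge a b ha hb hab) (hedge a c ha hc hac)
        (hedge b c hb hc hbc)
  refine ⟨φ, fun L => ⟨?_, ?_⟩⟩
  · -- forward direction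
    intro hL
    have hL4 := hD₁.2.1 L hL
    obtain ⟨p, b, c, d, hpb, hpc, hpd, hbc, hbd, hcd, rfl⟩ := dg_card_four hL4
    have hW₁ := dg_line_witness hD₁.2.1 hss₁ hsd₁ hRT₁ hpb hpc hpd hbc hbd hcd hL
    have htr₁ : ({p, b, c} : Finset Ω₁) ∈ collinearTriples B₁ :=
      dg_mem_collinear hL hpb hpc hbc (dg_triple_subset_quad1 p b c d)
    have htr₂ := (hφC p b c).mp htr₁
    obtain ⟨e, he, hMe⟩ := dg_exists_fourth hD₂.2.1 htr₂
    have hep : e ≠ φ p := fun h => he (by simp [h])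
    have heb : e ≠ φ b := fun h => he (by simp [h])
    have hec : e ≠ φ c := fun h => he (by simp [h])
    rw [dg_insert4 (φ p) (φ b) (φ c) e] at hMe
    have hW₂' := dg_line_witness hD₂.2.1 hss₂ hsd₂ hRT₂ (φ.injective.ne hpb)
      (φ.injective.ne hpc) (Ne.symm hep) (φ.injective.ne hbc) (Ne.symm heb)
      (Ne.symm hec) hMe
    have hW₂ := dg_wpred_map φ hφC hW₁
    have hed : e = φ d := dg_witness_unique hD₂ hn₂ hRT₂ hW₂' hW₂
    have hmap : ({p, b, c, d} : Finset Ω₁).map φ.toEmbedding =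
        ({φ p, φ b, φ c, φ d} : Finset Ω₂) := by
      simp [Finset.map_insert, Finset.map_singleton]
    rw [hmap, ← hed]
    exact hMe
  · -- reverse direction
    intro hL2
    have hL4 : L.card = 4 := by
      have h := hD₂.2.1 _ hL2
      rwa [Finset.card_map] at h
    obtain ⟨p, b, c, d, hpb, hpc, hpd, hbc, hbd, hcd, rfl⟩ := dg_card_four hL4
    have hmap : ({p, b, c, d} : Finset Ω₁).map φ.toEmbedding =
        ({φ p, φ b, φ c, φ d} : Finset Ω₂) := by
      simp [Finset.map_insert, Finset.map_singleton]
    rw [hmap] at hL2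
    have hW₂ := dg_line_witness hD₂.2.1 hss₂ hsd₂ hRT₂ (φ.injective.ne hpb)
      (φ.injective.ne hpc) (φ.injective.ne hpd) (φ.injective.ne hbc)
      (φ.injective.ne hbd) (φ.injective.ne hcd) hL2
    have htr₂ : ({φ p, φ b, φ c} : Finset Ω₂) ∈ collinearTriples B₂ :=
      dg_mem_collinear hL2 (φ.injective.ne hpb) (φ.injective.ne hpc)
        (φ.injective.ne hbc) (dg_triple_subset_quad1 _ _ _ _)
    have htr₁ := (hφC p b c).mpr htr₂
    obtain ⟨d', hd', hN⟩ := dg_exists_fourth hD₁.2.1 htr₁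
    have hd'p : d' ≠ p := fun h => hd' (by simp [h])
    have hd'b : d' ≠ b := fun h => hd' (by simp [h])
    have hd'c : d' ≠ c := fun h => hd' (by simp [h])
    rw [dg_insert4 p b c d'] at hN
    have hW₁' := dg_line_witness hD₁.2.1 hss₁ hsd₁ hRT₁ hpb hpc (Ne.symm hd'p) hbc
      (Ne.symm hd'b) (Ne.symm hd'c) hN
    have hW₂'' := dg_wpred_map φ hφC hW₁'
    have hdd : d' = d := φ.injective (dg_witness_unique hD₂ hn₂ hRT₂ hW₂'' hW₂)
    rwa [hdd] at hN
end
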